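/- For every positive integer N there exists a finite simple connected graph G such that the Graver basis of the toric ideal I_G contains a binomial whose degree exceeds the degree of every circuit of I_G by at least N. -/

import Mathlib

open MvPolynomial

noncomputable section

/-! ### Term orders, initial terms, (reduced) Gröbner bases, universal Gröbner basis -/

/-- A term order on the monomials (exponent vectors) in variables indexed by `σ`:
a linear order for which `0` is least and which is compatible with addition. -/
structure TermOrder (σ : Type*) where
  lo : LinearOrder (σ →₀ ℕ)
  zero_min : ∀ u : σ →₀ ℕ, lo.le 0 u
  add_right : ∀ u v w : σ →₀ ℕ, lo.le u v → lo.le (u + w) (v + w)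

variable {σ : Type*} {K : Type*} [Field K]

/-- The leading (largest) exponent of a polynomial with respect to a term order
(junk value `0` if `f = 0`). -/
def TermOrder.leadExp (t : TermOrder σ) (f : MvPolynomial σ K) : σ →₀ ℕ :=
  haveI := Classical.propDecidable (f = 0)
  if h : f = 0 then 0
  else @Finset.max' _ t.lo f.support
    (Finset.nonempty_iff_ne_empty.mpr fun he => h (MvPolynomial.support_eq_empty.mp he))

/-- The initial term of a polynomial with respect to a term order. -/
def TermOrder.initial (t : TermOrder σ) (f : MvPolynomial σ K) : MvPolynomial σ K :=
  monomial (t.leadExp f) (f.coeff (t.leadExp f))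

/-- `𝒢` is a Gröbner basis of `I` w.r.t. the term order `t`. -/
def IsGroebnerBasis (t : TermOrder σ) (I : Ideal (MvPolynomial σ K))
    (𝒢 : Finset (MvPolynomial σ K)) : Prop :=
  (𝒢 : Set (MvPolynomial σ K)) ⊆ (I : Set (MvPolynomial σ K)) ∧
    Ideal.span (t.initial '' (𝒢 : Set (MvPolynomial σ K))) =
      Ideal.span (t.initial '' (I : Set (MvPolynomial σ K)))

/-- `𝒢` is a reduced Gröbner basis of `I` w.r.t. `t`: a Gröbner basis, all of whose elements
are monic, and no monomial occurring in an element of `𝒢` is divisible by the initial term of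
a different element of `𝒢`. -/
def IsReducedGroebnerBasis (t : TermOrder σ) (I : Ideal (MvPolynomial σ K))
    (𝒢 : Finset (MvPolynomial σ K)) : Prop :=
  IsGroebnerBasis t I 𝒢 ∧
    (∀ g ∈ 𝒢, g.coeff (t.leadExp g) = 1) ∧
    (∀ g ∈ 𝒢, ∀ g' ∈ 𝒢, g' ≠ g → ∀ u ∈ g.support, ¬ t.leadExp g' ≤ u)

/-- The universal Gröbner basis of `I`: the union of all reduced Gröbner bases of `I`
over all term orders. -/
def UniversalGB (I : Ideal (MvPolynomial σ K)) : Set (MvPolynomial σ K) :=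
  {f | ∃ (t : TermOrder σ) (𝒢 : Finset (MvPolynomial σ K)),
    IsReducedGroebnerBasis t I 𝒢 ∧ f ∈ 𝒢}

/-! ### Binomials, primitive binomials (Graver basis), circuits -/

/-- The binomial `x^u - x^v`. -/
def binom (K : Type*) [Field K] {σ : Type*} (u v : σ →₀ ℕ) : MvPolynomial σ K :=
  monomial u 1 - monomial v 1

/-- `f` is a primitive binomial of `I`: `f = x^u - x^v ∈ I` and there is no other binomial
`x^w - x^z ∈ I` with `x^w ∣ x^u` and `x^z ∣ x^v`.  The set of primitive binomials of `I`
is the Graver basis of `I`. -/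
def IsPrimitiveBinomial (I : Ideal (MvPolynomial σ K)) (f : MvPolynomial σ K) : Prop :=
  ∃ u v : σ →₀ ℕ, u ≠ v ∧ f = binom K u v ∧ f ∈ I ∧
    ∀ w z : σ →₀ ℕ, w ≠ z → binom K w z ∈ I → w ≤ u → z ≤ v → w = u ∧ z = v

/-- `f` is a circuit of `I`: an irreducible binomial of `I` whose support (set of variables
occurring in it) is minimal among the supports of nonzero binomials of `I`. -/
def IsCircuitBinomial (I : Ideal (MvPolynomial σ K)) (f : MvPolynomial σ K) : Prop :=
  (∃ u v : σ →₀ ℕ, u ≠ v ∧ f = binom K u v) ∧ f ∈ I ∧ Irreducible f ∧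
    ∀ g : MvPolynomial σ K, (∃ u v : σ →₀ ℕ, u ≠ v ∧ g = binom K u v) → g ∈ I →
      g.vars ⊆ f.vars → g.vars = f.vars

/-- The toric ideal of a vector configuration `A = (a_1, …, a_m) ⊆ ℕ^n`: the ideal generated
by all binomials `x^u - x^v` with `Σ uᵢ aᵢ = Σ vᵢ aᵢ`. -/
def toricIdealOfConfig (K : Type*) [Field K] {m n : ℕ} (A : Fin m → Fin n → ℕ) :
    Ideal (MvPolynomial (Fin m) K) :=
  Ideal.span {f | ∃ u v : Fin m →₀ ℕ,
    f = binom K u v ∧ (∑ i, u i • A i) = ∑ i, v i • A i}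

/-! ### Toric ideals of graphs -/

variable {V : Type*}

/-- The image `x_u * x_v` of an edge `e = {u, v}`. -/
def edgeImage (K : Type*) [Field K] {V : Type*} (e : Sym2 V) : MvPolynomial V K :=
  Sym2.lift ⟨fun a b => X a * X b, fun a b => mul_comm _ _⟩ e

/-- The toric ideal `I_G` of a graph `G`: the kernel of the `K`-algebra map
`K[e : e ∈ E(G)] → K[x_v : v ∈ V(G)]`, `e = {u,v} ↦ x_u x_v`. -/
def graphToricIdeal (K : Type*) [Field K] (G : SimpleGraph V) :
    Ideal (MvPolynomial G.edgeSet K) :=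
  RingHom.ker (MvPolynomial.aeval
    (fun e : G.edgeSet => edgeImage K (e : Sym2 V)) :
      MvPolynomial G.edgeSet K →ₐ[K] MvPolynomial V K).toRingHom

/-- An even closed walk `(v_0, v_1, …, v_{2q} = v_0)` in a graph `G`;
edges and vertices may repeat. -/
structure EvenClosedWalk (G : SimpleGraph V) where
  q : ℕ
  verts : ℕ → V
  adj : ∀ i, i < 2 * q → G.Adj (verts i) (verts (i + 1))
  closed : verts (2 * q) = verts 0

namespace EvenClosedWalk

variable {G : SimpleGraph V}

/-- The `i`-th edge of the walk, as an element of the edge set of `G`. -/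
def edge (w : EvenClosedWalk G) (i : ℕ) (h : i < 2 * w.q) : G.edgeSet :=
  ⟨s(w.verts i, w.verts (i + 1)), w.adj i h⟩

/-- The exponent vector `w⁺` of the monomial `E⁺(w)`, the product of the edges of `w`
in odd position (`1`-indexed). -/
def plusExp (w : EvenClosedWalk G) : G.edgeSet →₀ ℕ :=
  ∑ k : Fin w.q, Finsupp.single (w.edge (2 * (k : ℕ)) (by have := k.isLt; omega)) 1

/-- The exponent vector `w⁻` of the monomial `E⁻(w)`, the product of the edges of `w`
in even position (`1`-indexed). -/
def minusExp (w : EvenClosedWalk G) : G.edgeSet →₀ ℕ :=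
  ∑ k : Fin w.q, Finsupp.single (w.edge (2 * (k : ℕ) + 1) (by have := k.isLt; omega)) 1

end EvenClosedWalk

/-- The monomial `E⁺(w)`. -/
def Eplus (K : Type*) [Field K] {G : SimpleGraph V} (w : EvenClosedWalk G) :
    MvPolynomial G.edgeSet K :=
  monomial w.plusExp 1

/-- The monomial `E⁻(w)`. -/
def Eminus (K : Type*) [Field K] {G : SimpleGraph V} (w : EvenClosedWalk G) :
    MvPolynomial G.edgeSet K :=
  monomial w.minusExp 1

/-- The binomial `B_w = E⁺(w) - E⁻(w)` of an even closed walk. -/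
def Bw (K : Type*) [Field K] {G : SimpleGraph V} (w : EvenClosedWalk G) :
    MvPolynomial G.edgeSet K :=
  binom K w.plusExp w.minusExp

namespace EvenClosedWalk

variable {G : SimpleGraph V}

/-- The number of positions of the walk at which the edge `e` appears. -/
def count [DecidableEq V] (w : EvenClosedWalk G) (e : Sym2 V) : ℕ :=
  ((Finset.range (2 * w.q)).filter fun i => e = s(w.verts i, w.verts (i + 1))).card

/-- The subgraph `𝐰` of `G` spanned by the edges of the walk `w`. -/
def graph (w : EvenClosedWalk G) : SimpleGraph V :=
  SimpleGraph.fromEdgeSet {e | ∃ i, ∃ _ : i < 2 * w.q, e = s(w.verts i, w.verts (i + 1))}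

/-- The set `w⁺` of edges of `w` in odd position (`1`-indexed). -/
def plusEdges (w : EvenClosedWalk G) : Set (Sym2 V) :=
  {e | ∃ k, ∃ _ : k < w.q, e = s(w.verts (2 * k), w.verts (2 * k + 1))}

/-- The set `w⁻` of edges of `w` in even position (`1`-indexed). -/
def minusEdges (w : EvenClosedWalk G) : Set (Sym2 V) :=
  {e | ∃ k, ∃ _ : k < w.q, e = s(w.verts (2 * k + 1), w.verts (2 * k + 2))}

/-- An even closed walk is primitive if it is nontrivial and there is no even closed
subwalk `ξ` of smaller length with `E⁺(ξ) ∣ E⁺(w)` and `E⁻(ξ) ∣ E⁻(w)`. -/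
def IsPrimitive (w : EvenClosedWalk G) : Prop :=
  0 < w.q ∧ ∀ ξ : EvenClosedWalk G, 0 < ξ.q → ξ.q < w.q →
    ¬(ξ.plusExp ≤ w.plusExp ∧ ξ.minusExp ≤ w.minusExp)

/-- The walk `w` is a cycle: it visits no vertex twice. -/
def IsCycle (w : EvenClosedWalk G) : Prop :=
  2 ≤ w.q ∧ ∀ i j, i < 2 * w.q → j < 2 * w.q → w.verts i = w.verts j → i = j

end EvenClosedWalk

/-! ### Cut vertices, cut edges, blocks, sinks -/

/-- `v` is a cut vertex of `H`: removing `v` (and the edges through it) disconnects two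
vertices different from `v` that were connected in `H`. -/
def IsCutVertex (H : SimpleGraph V) (v : V) : Prop :=
  ∃ a b, a ≠ v ∧ b ≠ v ∧ H.Reachable a b ∧
    ¬(SimpleGraph.fromEdgeSet {e | e ∈ H.edgeSet ∧ v ∉ e}).Reachable a b

/-- `e` is a cut edge of `H`: removing it disconnects two vertices connected in `H`. -/
def IsCutEdge (H : SimpleGraph V) (e : Sym2 V) : Prop :=
  e ∈ H.edgeSet ∧ ∃ a b, H.Reachable a b ∧ ¬(H.deleteEdges {e}).Reachable a b

/-- `H` is biconnected: it has an edge, it is connected (on its support),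
and it has no cut vertex. -/
def IsBiconnected (H : SimpleGraph V) : Prop :=
  H.edgeSet.Nonempty ∧ (∀ a ∈ H.support, ∀ b ∈ H.support, H.Reachable a b) ∧
    ∀ v, ¬IsCutVertex H v

/-- `B` is a block of `H`: a maximal biconnected subgraph. -/
def IsBlock (H B : SimpleGraph V) : Prop :=
  B ≤ H ∧ IsBiconnected B ∧ ∀ B', B ≤ B' → B' ≤ H → IsBiconnected B' → B' = B

/-- A graph is a cycle (graph): its edge set is the edge set of a cycle of length `≥ 3`. -/
def IsCycleGraph (B : SimpleGraph V) : Prop :=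
  ∃ (n : ℕ) (f : ℕ → V), 3 ≤ n ∧
    (∀ i j, i < n → j < n → f i = f j → i = j) ∧
    B.edgeSet = {e | ∃ i, ∃ _ : i < n, e = s(f i, f ((i + 1) % n))}

/-- `v` is a sink of the block `B` of the walk `w`: a common vertex of two odd
(or two even) edges of the walk belonging to `B`. -/
def IsSinkOf {G : SimpleGraph V} (w : EvenClosedWalk G) (B : SimpleGraph V) (v : V) : Prop :=
  ∃ e₁ e₂ : Sym2 V, e₁ ≠ e₂ ∧ e₁ ∈ B.edgeSet ∧ e₂ ∈ B.edgeSet ∧ v ∈ e₁ ∧ v ∈ e₂ ∧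
    ((e₁ ∈ w.plusEdges ∧ e₂ ∈ w.plusEdges) ∨ (e₁ ∈ w.minusEdges ∧ e₂ ∈ w.minusEdges))

/-- `B` is a pure cyclic block of the walk `w`: a block of `𝐰` which is a cycle all of whose
edges lie in `w⁺`, or all in `w⁻`. -/
def IsPureCyclicBlock {G : SimpleGraph V} (w : EvenClosedWalk G) (B : SimpleGraph V) : Prop :=
  IsBlock w.graph B ∧ IsCycleGraph B ∧
    (B.edgeSet ⊆ w.plusEdges ∨ B.edgeSet ⊆ w.minusEdges)

/-- A primitive walk is mixed if it has no pure cyclic block. -/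
def EvenClosedWalk.IsMixed {G : SimpleGraph V} (w : EvenClosedWalk G) : Prop :=
  ∀ B : SimpleGraph V, ¬IsPureCyclicBlock w B


namespace TTAux

variable {K : Type*} [Field K] {σ : Type*}

theorem binom_coeff [DecidableEq σ] (u v m : σ →₀ ℕ) :
    coeff m (binom K u v) = (if u = m then (1:K) else 0) - if v = m then 1 else 0 := by
  classical
  simp [binom, coeff_monomial]

theorem binom_ne_zero {u v : σ →₀ ℕ} (h : u ≠ v) : binom K u v ≠ 0 := by
  classical
  intro h0
  have h1 : coeff u (binom K u v) = 1 := by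
    rw [binom_coeff, if_pos rfl, if_neg (Ne.symm h), sub_zero]
  rw [h0, coeff_zero] at h1
  exact one_ne_zero h1.symm

theorem binom_support [DecidableEq σ] {u v : σ →₀ ℕ} (h : u ≠ v) :
    (binom K u v).support = {u, v} := by
  ext m
  simp only [MvPolynomial.mem_support_iff, binom_coeff, Finset.mem_insert, Finset.mem_singleton]
  by_cases hu : u = m <;> by_cases hv : v = m
  · exact absurd (hu.trans hv.symm) h
  · simp [hu, hv, eq_comm]
  · simp [hu, hv, eq_comm]
  · simp [hu, hv]
    constructor
    · intro hum; exact absurd hum.symm hu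
    · intro hvm; exact absurd hvm.symm hv

theorem binom_vars [DecidableEq σ] {u v : σ →₀ ℕ} (h : u ≠ v) :
    (binom K u v).vars = u.support ∪ v.support := by
  classical
  ext i
  rw [MvPolynomial.mem_vars]
  constructor
  · rintro ⟨d, hd, hi⟩
    rw [binom_support (K := K) h] at hd
    rcases Finset.mem_insert.mp hd with rfl | hd
    · exact Finset.mem_union_left _ hi
    · rw [Finset.mem_singleton] at hd; subst hd; exact Finset.mem_union_right _ hi
  · intro hi
    rcases Finset.mem_union.mp hi with hi | hi
    · exact ⟨u, by rw [binom_support (K := K) h]; exact Finset.mem_insert_self _ _, hi⟩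
    · exact ⟨v, by rw [binom_support (K := K) h]; simp, hi⟩

theorem binom_totalDegree [DecidableEq σ] {u v : σ →₀ ℕ} (h : u ≠ v) :
    (binom K u v).totalDegree
      = max (u.sum fun _ n => n) (v.sum fun _ n => n) := by
  classical
  rw [MvPolynomial.totalDegree, binom_support (K := K) h]
  rw [Finset.sup_insert, Finset.sup_singleton]

/-! ### units -/

theorem not_isUnit_monomial {m : σ →₀ ℕ} (hm : m ≠ 0) : ¬ IsUnit (monomial m (1:K)) := by
  classical
  intro h
  have h2 := h.map (aeval (fun _ : σ => (Polynomial.X : Polynomial K)))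
  rw [aeval_monomial] at h2
  have hprod : (m.prod fun _ k => (Polynomial.X : Polynomial K) ^ k)
      = Polynomial.X ^ (m.sum fun _ k => k) := by
    rw [Finsupp.prod, Finsupp.sum, Finset.prod_pow_eq_pow_sum]
  rw [hprod, map_one, one_mul] at h2
  have hn : (m.sum fun _ k => k) ≠ 0 := by
    obtain ⟨a, ha⟩ := Finsupp.ne_iff.mp hm
    simp only [Finsupp.coe_zero, Pi.zero_apply] at ha
    have hmem : a ∈ m.support := Finsupp.mem_support_iff.mpr ha
    have : m a ≤ m.sum fun _ k => k :=
      Finset.single_le_sum (f := fun i => m i) (fun _ _ => Nat.zero_le _) hmem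
    omega
  obtain ⟨r, _, hr⟩ := Polynomial.isUnit_iff.mp h2
  have := congrArg (fun p => Polynomial.coeff p (m.sum fun _ k => k)) hr
  simp [Polynomial.coeff_X_pow, Polynomial.coeff_C, hn] at this

theorem key_filter₁ {a b d : ℕ} (hd : 2 ≤ d) (h : b < a) :
    (Finset.range d).filter (fun i => (d-1)*a = i*a + (d-1-i)*b) = {d-1} := by
  ext i
  simp only [Finset.mem_filter, Finset.mem_range, Finset.mem_singleton]
  constructor
  · rintro ⟨hi, heq⟩
    by_contra hne
    have hi' : i < d - 1 := by omega
    have h1 : (d-1-i)*b < (d-1-i)*a :=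
      Nat.mul_lt_mul_of_pos_left h (by omega)
    have h2 : i*a + (d-1-i)*a = (d-1)*a := by
      rw [← Nat.add_mul]; congr 1; omega
    omega
  · rintro rfl
    constructor
    · omega
    · simp

theorem key_filter₂ {a b d : ℕ} (hd : 2 ≤ d) (h : a < b) :
    (Finset.range d).filter (fun i => (d-1)*b = i*a + (d-1-i)*b) = {0} := by
  ext i
  simp only [Finset.mem_filter, Finset.mem_range, Finset.mem_singleton]
  constructor
  · rintro ⟨hi, heq⟩
    by_contra hne
    have h1 : i*a < i*b := Nat.mul_lt_mul_of_pos_left h (by omega)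
    have h2 : i*b + (d-1-i)*b = (d-1)*b := by
      rw [← Nat.add_mul]; congr 1; omega
    omega
  · rintro rfl
    constructor
    · omega
    · simp

theorem aeval_single_var (e₀ : σ) [DecidableEq σ] (m : σ →₀ ℕ) :
    (aeval (fun e : σ => if e = e₀ then (Polynomial.X : Polynomial K) else 1))
      (monomial m (1:K)) = Polynomial.X ^ (m e₀) := by
  rw [aeval_monomial, map_one, one_mul]
  refine Finsupp.prod_eq_single e₀ (fun b _ hb => by rw [if_neg hb, one_pow]) ?_ |>.trans ?_
  · intro _; exact pow_zero _
  · rw [if_pos rfl]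

theorem not_isUnit_geomsum {u' v' : σ →₀ ℕ} (hne : u' ≠ v') {d : ℕ} (hd : 2 ≤ d) :
    ¬ IsUnit (∑ i ∈ Finset.range d,
        (monomial u' (1:K))^i * (monomial v' (1:K))^(d-1-i)) := by
  classical
  intro h
  obtain ⟨e₀, he₀⟩ := Finsupp.ne_iff.mp hne
  set ψ := (aeval (fun e : σ => if e = e₀ then (Polynomial.X : Polynomial K) else 1) :
    MvPolynomial σ K →ₐ[K] Polynomial K)
  have h2 := h.map ψ
  have hψ : ψ (∑ i ∈ Finset.range d, (monomial u' (1:K))^i * (monomial v' 1)^(d-1-i))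
      = ∑ i ∈ Finset.range d, Polynomial.X ^ (i * u' e₀ + (d-1-i) * v' e₀) := by
    rw [map_sum]
    refine Finset.sum_congr rfl fun i _ => ?_
    rw [map_mul, map_pow, map_pow, aeval_single_var, aeval_single_var,
      ← pow_mul, ← pow_mul, ← pow_add, mul_comm (u' e₀), mul_comm (v' e₀)]
  rw [hψ] at h2
  obtain ⟨r, _, hr⟩ := Polynomial.isUnit_iff.mp h2
  set a := u' e₀
  set b := v' e₀
  -- key exponent
  rcases lt_or_gt_of_ne he₀ with hab | hab
  · -- a < b : key = (d-1)*b, unique index 0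
    have hkey := congrArg (fun p => Polynomial.coeff p ((d-1)*b)) hr
    simp only [Polynomial.finset_sum_coeff, Polynomial.coeff_X_pow, Polynomial.coeff_C] at hkey
    rw [← Finset.sum_filter, key_filter₂ hd hab, Finset.sum_singleton] at hkey
    have hb0 : (d-1)*b ≠ 0 := by
      have : 0 < b := by omega
      have : 0 < d - 1 := by omega
      positivity
    simp [hb0] at hkey
  · have hkey := congrArg (fun p => Polynomial.coeff p ((d-1)*a)) hr
    simp only [Polynomial.finset_sum_coeff, Polynomial.coeff_X_pow, Polynomial.coeff_C] at hkey
    rw [← Finset.sum_filter, key_filter₁ hd hab, Finset.sum_singleton] at hkey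
    have hb0 : (d-1)*a ≠ 0 := by
      have : 0 < a := by omega
      have : 0 < d - 1 := by omega
      positivity
    simp [hb0] at hkey

/-! ### toric ideal membership -/

section Graph

variable {W : Type*} [DecidableEq W] (G : SimpleGraph W)

/-- The exponent vector of the image of an edge. -/
def sym2exp : Sym2 W → (W →₀ ℕ) :=
  Sym2.lift ⟨fun a b => Finsupp.single a 1 + Finsupp.single b 1, fun a b => add_comm _ _⟩

theorem sym2exp_mk (a b : W) :
    sym2exp s(a,b) = Finsupp.single a 1 + Finsupp.single b 1 :=
  Sym2.lift_mk _ _ _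

theorem edgeImage_eq_monomial (e : Sym2 W) :
    edgeImage K e = monomial (sym2exp e) (1:K) := by
  induction e using Sym2.ind with
  | _ a b =>
    rw [edgeImage, Sym2.lift_mk, sym2exp_mk]
    show X a * X b = _
    rw [X, X, monomial_mul, one_mul]

/-- The vertex-degree vector of an exponent vector on edges. -/
def degMap (u : G.edgeSet →₀ ℕ) : W →₀ ℕ :=
  u.sum fun e k => k • sym2exp (e : Sym2 W)

theorem degMap_add (u v : G.edgeSet →₀ ℕ) :
    degMap G (u + v) = degMap G u + degMap G v :=
  Finsupp.sum_add_index' (fun _ => zero_smul _ _) (fun _ b₁ b₂ => add_smul b₁ b₂ _)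

theorem degMap_single (e : G.edgeSet) (k : ℕ) :
    degMap G (Finsupp.single e k) = k • sym2exp (e : Sym2 W) :=
  Finsupp.sum_single_index (zero_smul _ _)

theorem degMap_smul (d : ℕ) (u : G.edgeSet →₀ ℕ) :
    degMap G (d • u) = d • degMap G u := by
  induction d with
  | zero => simp [degMap]
  | succ n ih => rw [succ_nsmul, succ_nsmul, degMap_add, ih]

theorem aeval_monomial_one (u : G.edgeSet →₀ ℕ) :
    (aeval fun e : G.edgeSet => edgeImage K (e : Sym2 W)) (monomial u (1:K))
      = monomial (degMap G u) 1 := by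
  induction u using Finsupp.induction with
  | zero => simp [degMap]
  | single_add e k u he hk ih =>
    have hsplit : (monomial (Finsupp.single e k + u) (1:K))
        = monomial (Finsupp.single e k) 1 * monomial u 1 := by
      rw [monomial_mul, one_mul]
    rw [hsplit, map_mul, ih]
    have h1 : (monomial (Finsupp.single e k) (1:K)) = (X e)^k := by
      rw [X_pow_eq_monomial]
    rw [h1, map_pow, aeval_X, edgeImage_eq_monomial, monomial_pow, one_pow, monomial_mul,
      one_mul, degMap_add, degMap_single]

theorem binom_mem_toric_iff (u v : G.edgeSet →₀ ℕ) :
    binom K u v ∈ graphToricIdeal K G ↔ degMap G u = degMap G v := by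
  rw [graphToricIdeal, RingHom.mem_ker]
  show (aeval fun e : G.edgeSet => edgeImage K (e : Sym2 W)) (binom K u v) = 0 ↔ _
  rw [binom, map_sub, aeval_monomial_one, aeval_monomial_one, sub_eq_zero]
  rw [monomial_eq_monomial_iff]
  constructor
  · rintro (⟨h, _⟩ | ⟨h, _⟩)
    · exact h
    · exact absurd h one_ne_zero
  · intro h; exact Or.inl ⟨h, rfl⟩

theorem toric_ne_top : graphToricIdeal K G ≠ ⊤ := by
  rw [graphToricIdeal]
  exact RingHom.ker_ne_top _

theorem sym2exp_apply {e : Sym2 W} (he : ¬ e.IsDiag) (x : W) :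
    sym2exp e x = if x ∈ e then 1 else 0 := by
  induction e using Sym2.ind with
  | _ a b =>
    have hab : a ≠ b := by
      intro h; exact he (by rw [h]; exact Sym2.isDiag_iff_proj_eq |>.mpr rfl)
    rw [sym2exp_mk, Finsupp.add_apply, Finsupp.single_apply, Finsupp.single_apply]
    simp only [Sym2.mem_iff]
    by_cases hxa : a = x <;> by_cases hxb : b = x
    · exact absurd (hxa.trans hxb.symm) hab
    · simp [hxa, hxb, eq_comm]
    · simp [hxa, hxb, eq_comm]
    · simp [hxa, hxb, eq_comm, Ne.symm hxa, Ne.symm hxb]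

variable [Fintype G.edgeSet]

theorem degMap_apply (u : G.edgeSet →₀ ℕ) (x : W) :
    degMap G u x = ∑ e : G.edgeSet, u e * (if x ∈ (e : Sym2 W) then 1 else 0) := by
  rw [degMap, Finsupp.sum_apply,
    Finsupp.sum_fintype _ _ (fun e => by rw [zero_smul]; rfl)]
  refine Finset.sum_congr rfl fun e _ => ?_
  rw [Finsupp.smul_apply, smul_eq_mul,
    sym2exp_apply (SimpleGraph.not_isDiag_of_mem_edgeSet G e.2)]

/-- Signed incidence sum. -/
def Tsum (c : G.edgeSet → ℤ) (x : W) : ℤ :=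
  ∑ e : G.edgeSet, c e * (if x ∈ (e : Sym2 W) then 1 else 0)

theorem binom_mem_iff_Tsum (u v : G.edgeSet →₀ ℕ) :
    binom K u v ∈ graphToricIdeal K G
      ↔ ∀ x : W, Tsum G (fun e => (u e : ℤ) - v e) x = 0 := by
  rw [binom_mem_toric_iff]
  constructor
  · intro h x
    have hx : degMap G u x = degMap G v x := by rw [h]
    rw [degMap_apply, degMap_apply] at hx
    rw [Tsum]
    have : ∀ e : G.edgeSet, ((u e : ℤ) - v e) * (if x ∈ (e : Sym2 W) then 1 else 0)
        = (u e : ℤ) * (if x ∈ (e : Sym2 W) then 1 else 0)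
          - (v e : ℤ) * (if x ∈ (e : Sym2 W) then 1 else 0) := fun e => by ring
    rw [Finset.sum_congr rfl (fun e _ => this e), Finset.sum_sub_distrib]
    have := congrArg (fun n : ℕ => (n : ℤ)) hx
    push_cast at this
    omega
  · intro h
    ext x
    have hx := h x
    rw [Tsum] at hx
    have : ∀ e : G.edgeSet, ((u e : ℤ) - v e) * (if x ∈ (e : Sym2 W) then 1 else 0)
        = (u e : ℤ) * (if x ∈ (e : Sym2 W) then 1 else 0)
          - (v e : ℤ) * (if x ∈ (e : Sym2 W) then 1 else 0) := fun e => by ring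
    rw [Finset.sum_congr rfl (fun e _ => this e), Finset.sum_sub_distrib, sub_eq_zero] at hx
    rw [degMap_apply, degMap_apply]
    have : ((∑ e : G.edgeSet, u e * (if x ∈ (e : Sym2 W) then 1 else 0) : ℕ) : ℤ)
        = ((∑ e : G.edgeSet, v e * (if x ∈ (e : Sym2 W) then 1 else 0) : ℕ) : ℤ) := by
      push_cast
      exact hx
    exact_mod_cast this

theorem sum_ite_mem_sym2 [Fintype W] {e : Sym2 W} (he : ¬ e.IsDiag) :
    ∑ x : W, (if x ∈ e then (1:ℤ) else 0) = 2 := by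
  induction e using Sym2.ind with
  | _ a b =>
    have hab : a ≠ b := fun h => he (by rw [h]; exact (Sym2.isDiag_iff_proj_eq).mpr rfl)
    have hsplit : ∀ x : W, (if x ∈ s(a,b) then (1:ℤ) else 0)
        = (if x = a then 1 else 0) + (if x = b then 1 else 0) := by
      intro x
      simp only [Sym2.mem_iff]
      by_cases hxa : x = a <;> by_cases hxb : x = b
      · exact absurd (hxa.symm.trans hxb) hab
      · simp [hxa, hxb, hab]
      · simp [hxa, hxb, Ne.symm hab]
      · simp [hxa, hxb]
    rw [Finset.sum_congr rfl (fun x _ => hsplit x), Finset.sum_add_distrib,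
      Finset.sum_ite_eq', Finset.sum_ite_eq']
    simp

/-- each edge has exactly two vertices, so a kernel vector sums to zero -/
theorem sum_eq_zero_of_Tsum [Fintype W] (c : G.edgeSet → ℤ)
    (hc : ∀ x : W, Tsum G c x = 0) : ∑ e : G.edgeSet, c e = 0 := by
  have h0 : ∑ x : W, Tsum G c x = 0 := by
    rw [Finset.sum_congr rfl (fun x _ => hc x), Finset.sum_const, smul_zero]
  unfold Tsum at h0
  rw [Finset.sum_comm] at h0
  have h1 : ∀ e : G.edgeSet,
      ∑ x : W, c e * (if x ∈ (e : Sym2 W) then (1:ℤ) else 0) = c e * 2 := by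
    intro e
    rw [← Finset.mul_sum,
      sum_ite_mem_sym2 (SimpleGraph.not_isDiag_of_mem_edgeSet G e.2)]
  rw [Finset.sum_congr rfl (fun e _ => h1 e), ← Finset.sum_mul] at h0
  omega

/-! ### consequences of irreducibility -/

theorem disjoint_of_irreducible {u v : G.edgeSet →₀ ℕ}
    (hmem : binom K u v ∈ graphToricIdeal K G)
    (hirr : Irreducible (binom K u v)) :
    ∀ e, u e = 0 ∨ v e = 0 := by
  classical
  by_contra hcon
  push_neg at hcon
  obtain ⟨e, hue, hve⟩ := hcon
  set m : G.edgeSet →₀ ℕ := u - (u - v) with hm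
  have hmu : m ≤ u := tsub_le_self
  have hmv : m ≤ v := by
    rw [Finsupp.le_def]
    intro i
    rw [hm, Finsupp.tsub_apply, Finsupp.tsub_apply]
    omega
  have hm0 : m ≠ 0 := by
    rw [Finsupp.ne_iff]
    refine ⟨e, ?_⟩
    rw [hm, Finsupp.tsub_apply, Finsupp.tsub_apply, Finsupp.coe_zero, Pi.zero_apply]
    omega
  have hfac : binom K u v = monomial m 1 * binom K (u - m) (v - m) := by
    rw [binom, binom, mul_sub, monomial_mul, monomial_mul, one_mul,
      add_tsub_cancel_of_le hmu, add_tsub_cancel_of_le hmv]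
  rcases hirr.isUnit_or_isUnit hfac with h | h
  · exact not_isUnit_monomial hm0 h
  · have h1 : degMap G (u - m) = degMap G (v - m) := by
      have hu1 : degMap G m + degMap G (u - m) = degMap G u := by
        rw [← degMap_add, add_tsub_cancel_of_le hmu]
      have hv1 : degMap G m + degMap G (v - m) = degMap G v := by
        rw [← degMap_add, add_tsub_cancel_of_le hmv]
      have := (binom_mem_toric_iff (K := K) G u v).mp hmem
      rw [← hu1, ← hv1] at this
      exact add_left_cancel this
    have hmem' : binom K (u - m) (v - m) ∈ graphToricIdeal K G :=
      (binom_mem_toric_iff (K := K) G _ _).mpr h1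
    exact toric_ne_top (K := K) G
      (Ideal.eq_top_of_isUnit_mem _ hmem' h)

theorem not_smul_of_irreducible {u v : G.edgeSet →₀ ℕ} (hne : u ≠ v)
    (hmem : binom K u v ∈ graphToricIdeal K G)
    (hirr : Irreducible (binom K u v))
    {d : ℕ} (hd : 2 ≤ d) {u' v' : G.edgeSet →₀ ℕ}
    (hu : u = d • u') (hv : v = d • v') : False := by
  classical
  have hne' : u' ≠ v' := fun h => hne (by rw [hu, hv, h])
  have hfac : binom K u v
      = (∑ i ∈ Finset.range d, (monomial u' (1:K))^i * (monomial v' 1)^(d-1-i))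
        * binom K u' v' := by
    rw [binom, binom, geom_sum₂_mul, monomial_pow, monomial_pow, one_pow, hu, hv]
  rcases hirr.isUnit_or_isUnit hfac with h | h
  · exact not_isUnit_geomsum hne' hd h
  · have h1 : degMap G u' = degMap G v' := by
      have := (binom_mem_toric_iff (K := K) G u v).mp hmem
      rw [hu, hv, degMap_smul, degMap_smul] at this
      ext a
      have h2 := congrArg (fun w => w a) this
      simp only [Finsupp.smul_apply, smul_eq_mul] at h2
      exact Nat.eq_of_mul_eq_mul_left (by omega) h2
    have hmem' : binom K u' v' ∈ graphToricIdeal K G :=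
      (binom_mem_toric_iff (K := K) G _ _).mpr h1
    exact toric_ne_top (K := K) G
      (Ideal.eq_top_of_isUnit_mem _ hmem' h)

end Graph

end TTAux

/-! ## The star graph: a center triangle, three long paths, three leaf triangles -/

namespace Star

open TTAux

/-- Vertex type: arm index × position. Positions: `0` = center vertex,
`1..Q+1` = path, `Q+1,Q+2,Q+3` = leaf triangle. -/
abbrev SV (Q : ℕ) := Fin 3 × Fin (Q+4)

variable (Q : ℕ)

def SAdj (x y : SV Q) : Prop :=
  (x.2.val = 0 ∧ y.2.val = 0 ∧ x.1 ≠ y.1) ∨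
  (x.1 = y.1 ∧ (x.2.val + 1 = y.2.val ∨ y.2.val + 1 = x.2.val ∨
    (x.2.val = Q+1 ∧ y.2.val = Q+3) ∨ (x.2.val = Q+3 ∧ y.2.val = Q+1)))

def SG : SimpleGraph (SV Q) where
  Adj := SAdj Q
  symm := by
    constructor
    intro x y h
    rcases h with ⟨h1, h2, h3⟩ | ⟨h1, h2⟩
    · exact Or.inl ⟨h2, h1, Ne.symm h3⟩
    · refine Or.inr ⟨h1.symm, ?_⟩
      tauto
  loopless := by
    constructor
    intro x h
    rcases h with ⟨_, _, h3⟩ | ⟨_, h2⟩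
    · exact h3 rfl
    · omega

noncomputable instance : Fintype ↥(SG Q).edgeSet := Fintype.ofFinite _

def vx (j : Fin 3) (i : ℕ) (h : i < Q+4) : SV Q := (j, ⟨i, h⟩)

theorem eq_vx_iff {b : SV Q} {j : Fin 3} {i : ℕ} {h : i < Q+4} :
    b = vx Q j i h ↔ (b.1 = j ∧ b.2.val = i) := by
  obtain ⟨b1, b2⟩ := b
  rw [vx, Prod.ext_iff]
  constructor
  · rintro ⟨ha, hb⟩; exact ⟨ha, congrArg Fin.val hb⟩
  · rintro ⟨ha, hb⟩; exact ⟨ha, Fin.ext hb⟩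

theorem vx_eq_iff {j k : Fin 3} {i i' : ℕ} {h : i < Q+4} {h' : i' < Q+4} :
    vx Q j i h = vx Q k i' h' ↔ (j = k ∧ i = i') := eq_vx_iff Q

-- Fin 3 arithmetic facts
theorem f3a : ∀ j : Fin 3, j + 1 + 1 = j + 2 := by decide
theorem f3b : ∀ j : Fin 3, j + 2 + 1 = j := by decide
theorem f3c : ∀ j : Fin 3, j + 2 + 2 = j + 1 := by decide
theorem f3d : ∀ j : Fin 3, j ≠ j + 1 := by decide
theorem f3e : ∀ j : Fin 3, j ≠ j + 2 := by decide
theorem f3f : ∀ j : Fin 3, j + 1 ≠ j + 2 := by decide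
theorem f3g : ∀ a b : Fin 3, a ≠ b → b = a + 1 ∨ b = a + 2 := by decide
theorem f3h : ∀ j : Fin 3, -(j + (j+1)) = j + 2 := by decide
theorem f3i : ∀ j j' : Fin 3, j = j' + 1 → j + 1 = j' → False := by decide

/-- center edges -/
def ceE (j : Fin 3) : ↥(SG Q).edgeSet :=
  ⟨s(vx Q j 0 (by omega), vx Q (j+1) 0 (by omega)),
    (SimpleGraph.mem_edgeSet _).mpr (Or.inl ⟨rfl, rfl, f3d j⟩)⟩

/-- path and leaf-side edges `{i, i+1}` -/
def peE (j : Fin 3) (i : ℕ) (h : i < Q+3) : ↥(SG Q).edgeSet :=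
  ⟨s(vx Q j i (by omega), vx Q j (i+1) (by omega)),
    (SimpleGraph.mem_edgeSet _).mpr (Or.inr ⟨rfl, Or.inl rfl⟩)⟩

/-- the leaf chord `{Q+1, Q+3}` -/
def leE (j : Fin 3) : ↥(SG Q).edgeSet :=
  ⟨s(vx Q j (Q+1) (by omega), vx Q j (Q+3) (by omega)),
    (SimpleGraph.mem_edgeSet _).mpr (Or.inr ⟨rfl, Or.inr (Or.inr (Or.inl ⟨rfl, rfl⟩))⟩)⟩

theorem ceE_inj {j j' : Fin 3} (h : ceE Q j = ceE Q j') : j = j' := by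
  have h1 := congrArg Subtype.val h
  rw [ceE, ceE, Sym2.eq_iff] at h1
  rcases h1 with ⟨h1, _⟩ | ⟨h1, h2⟩
  · exact ((vx_eq_iff Q).mp h1).1
  · have a1 := ((vx_eq_iff Q).mp h1).1
    have a2 := ((vx_eq_iff Q).mp h2).1
    exact (f3i j j' a1 a2).elim

theorem peE_inj {j j' : Fin 3} {i i' : ℕ} {h : i < Q+3} {h' : i' < Q+3}
    (he : peE Q j i h = peE Q j' i' h') : j = j' ∧ i = i' := by
  have h1 := congrArg Subtype.val he
  rw [peE, peE, Sym2.eq_iff] at h1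
  rcases h1 with ⟨h1, h2⟩ | ⟨h1, h2⟩
  · exact ⟨((vx_eq_iff Q).mp h1).1, ((vx_eq_iff Q).mp h1).2⟩
  · have a1 := ((vx_eq_iff Q).mp h1).2
    have a2 := ((vx_eq_iff Q).mp h2).2
    omega

theorem leE_inj {j j' : Fin 3} (h : leE Q j = leE Q j') : j = j' := by
  have h1 := congrArg Subtype.val h
  rw [leE, leE, Sym2.eq_iff] at h1
  rcases h1 with ⟨h1, _⟩ | ⟨h1, h2⟩
  · exact ((vx_eq_iff Q).mp h1).1
  · have := ((vx_eq_iff Q).mp h1).2; omega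

theorem ceE_ne_peE {j j' : Fin 3} {i : ℕ} {h : i < Q+3} : ceE Q j ≠ peE Q j' i h := by
  intro he
  have h1 := congrArg Subtype.val he
  rw [ceE, peE, Sym2.eq_iff] at h1
  rcases h1 with ⟨h1, h2⟩ | ⟨h1, h2⟩ <;>
    [skip; skip] <;>
  · have a1 := ((vx_eq_iff Q).mp h1).2
    have a2 := ((vx_eq_iff Q).mp h2).2
    omega

theorem ceE_ne_leE {j j' : Fin 3} : ceE Q j ≠ leE Q j' := by
  intro he
  have h1 := congrArg Subtype.val he
  rw [ceE, leE, Sym2.eq_iff] at h1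
  rcases h1 with ⟨h1, h2⟩ | ⟨h1, h2⟩ <;>
  · have a1 := ((vx_eq_iff Q).mp h1).2
    have a2 := ((vx_eq_iff Q).mp h2).2
    omega

theorem peE_ne_leE {j j' : Fin 3} {i : ℕ} {h : i < Q+3} : peE Q j i h ≠ leE Q j' := by
  intro he
  have h1 := congrArg Subtype.val he
  rw [peE, leE, Sym2.eq_iff] at h1
  rcases h1 with ⟨h1, h2⟩ | ⟨h1, h2⟩ <;>
  · have a1 := ((vx_eq_iff Q).mp h1).2
    have a2 := ((vx_eq_iff Q).mp h2).2
    omega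

/-- every edge is one of the named edges -/
theorem edge_classify (e : ↥(SG Q).edgeSet) :
    (∃ j, e = ceE Q j) ∨ (∃ j i h, e = peE Q j i h) ∨ (∃ j, e = leE Q j) := by
  obtain ⟨ev, he⟩ := e
  induction ev using Sym2.ind with
  | _ a b =>
    have hadj : SAdj Q a b := (SimpleGraph.mem_edgeSet _).mp he
    obtain ⟨a1, a2⟩ := a
    obtain ⟨b1, b2⟩ := b
    rcases hadj with ⟨h1, h2, h3⟩ | ⟨h1, h2⟩
    · simp only at h1 h2 h3
      rcases f3g a1 b1 h3 with hb | hb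
      · refine Or.inl ⟨a1, Subtype.ext ?_⟩
        show s((a1, a2), (b1, b2)) = s(_, _)
        rw [Sym2.eq_iff]
        exact Or.inl ⟨(eq_vx_iff Q).mpr ⟨rfl, h1⟩, (eq_vx_iff Q).mpr ⟨hb, h2⟩⟩
      · refine Or.inl ⟨b1, Subtype.ext ?_⟩
        show s((a1, a2), (b1, b2)) = s(_, _)
        rw [Sym2.eq_iff]
        refine Or.inr ⟨(eq_vx_iff Q).mpr ⟨?_, h1⟩, (eq_vx_iff Q).mpr ⟨rfl, h2⟩⟩
        rw [hb, f3b]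
    · simp only at h1 h2
      rcases h2 with h2 | h2 | ⟨h2, h2'⟩ | ⟨h2, h2'⟩
      · refine Or.inr (Or.inl ⟨a1, a2.val, by omega, Subtype.ext ?_⟩)
        show s((a1, a2), (b1, b2)) = s(_, _)
        rw [Sym2.eq_iff]
        exact Or.inl ⟨(eq_vx_iff Q).mpr ⟨rfl, rfl⟩, (eq_vx_iff Q).mpr ⟨h1.symm, h2.symm⟩⟩
      · refine Or.inr (Or.inl ⟨a1, b2.val, by omega, Subtype.ext ?_⟩)
        show s((a1, a2), (b1, b2)) = s(_, _)
        rw [Sym2.eq_iff]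
        exact Or.inr ⟨(eq_vx_iff Q).mpr ⟨rfl, h2.symm⟩, (eq_vx_iff Q).mpr ⟨h1.symm, rfl⟩⟩
      · refine Or.inr (Or.inr ⟨a1, Subtype.ext ?_⟩)
        show s((a1, a2), (b1, b2)) = s(_, _)
        rw [Sym2.eq_iff]
        exact Or.inl ⟨(eq_vx_iff Q).mpr ⟨rfl, h2⟩, (eq_vx_iff Q).mpr ⟨h1.symm, h2'⟩⟩
      · refine Or.inr (Or.inr ⟨a1, Subtype.ext ?_⟩)
        show s((a1, a2), (b1, b2)) = s(_, _)
        rw [Sym2.eq_iff]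
        exact Or.inr ⟨(eq_vx_iff Q).mpr ⟨rfl, h2⟩, (eq_vx_iff Q).mpr ⟨h1.symm, h2'⟩⟩

/-! ### the kernel vectors -/

/-- path-edge entry of the kernel vector with parameter `b`. -/
def pval (b : Fin 3 → ℤ) (j : Fin 3) (i : ℕ) : ℤ :=
  if i ≤ Q then -2 * (-1)^i * b j
  else if i = Q+1 then (-1)^Q * b j
  else -((-1)^Q * b j)

/-- the symmetric entry function -/
def Fent (b : Fin 3 → ℤ) : SV Q → SV Q → ℤ := fun x y =>
  if x.2.val = 0 ∧ y.2.val = 0 then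
    b x.1 + b y.1 - b (-(x.1 + y.1))
  else if x.1 = y.1 then
    (if max x.2.val y.2.val = min x.2.val y.2.val + 1 then pval Q b x.1 (min x.2.val y.2.val)
     else if min x.2.val y.2.val = Q+1 ∧ max x.2.val y.2.val = Q+3 then (-1)^Q * b x.1
     else 0)
  else 0

theorem Fent_symm (b : Fin 3 → ℤ) : ∀ x y, Fent Q b x y = Fent Q b y x := by
  intro x y
  unfold Fent
  by_cases h1 : x.2.val = 0 ∧ y.2.val = 0
  · rw [if_pos h1, if_pos ⟨h1.2, h1.1⟩, add_comm (b x.1) (b y.1), add_comm x.1 y.1]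
  · have h1' : ¬ (y.2.val = 0 ∧ x.2.val = 0) := fun h => h1 ⟨h.2, h.1⟩
    rw [if_neg h1, if_neg h1']
    by_cases h2 : x.1 = y.1
    · have h2' : y.1 = x.1 := h2.symm
      rw [if_pos h2, if_pos h2', Nat.max_comm (x.2.val) (y.2.val),
        Nat.min_comm (x.2.val) (y.2.val), h2]
    · have h2' : ¬ y.1 = x.1 := fun h => h2 h.symm
      rw [if_neg h2, if_neg h2']

/-- the kernel vector with parameter `b`. -/
def cvec (b : Fin 3 → ℤ) : ↥(SG Q).edgeSet → ℤ := fun e =>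
  Sym2.lift ⟨Fent Q b, Fent_symm Q b⟩ (e : Sym2 (SV Q))

theorem cvec_ce (b : Fin 3 → ℤ) (j : Fin 3) :
    cvec Q b (ceE Q j) = b j + b (j+1) - b (j+2) := by
  unfold cvec ceE
  rw [Sym2.lift_mk]
  show Fent Q b (vx Q j 0 _) (vx Q (j+1) 0 _) = _
  unfold Fent vx
  rw [if_pos ⟨rfl, rfl⟩]
  show b j + b (j+1) - b (-(j + (j+1))) = _
  rw [f3h j]

theorem cvec_pe (b : Fin 3 → ℤ) (j : Fin 3) (i : ℕ) (h : i < Q+3) :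
    cvec Q b (peE Q j i h) = pval Q b j i := by
  unfold cvec peE
  rw [Sym2.lift_mk]
  show Fent Q b (vx Q j i _) (vx Q j (i+1) _) = _
  unfold Fent vx
  have h1 : ¬ ((i:ℕ) = 0 ∧ (i+1:ℕ) = 0) := by omega
  rw [if_neg h1, if_pos rfl]
  show (if max i (i+1) = min i (i+1) + 1 then pval Q b j (min i (i+1)) else _) = _
  have h2 : max i (i+1) = i + 1 := by omega
  have h3 : min i (i+1) = i := by omega
  rw [h2, h3, if_pos rfl]

theorem cvec_le (b : Fin 3 → ℤ) (j : Fin 3) :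
    cvec Q b (leE Q j) = (-1)^Q * b j := by
  unfold cvec leE
  rw [Sym2.lift_mk]
  show Fent Q b (vx Q j (Q+1) _) (vx Q j (Q+3) _) = _
  unfold Fent vx
  have h1 : ¬ ((Q+1:ℕ) = 0 ∧ (Q+3:ℕ) = 0) := by omega
  rw [if_neg h1, if_pos rfl]
  show (if max (Q+1) (Q+3) = min (Q+1) (Q+3) + 1 then _ else
    if min (Q+1) (Q+3) = Q+1 ∧ max (Q+1) (Q+3) = Q+3 then (-1)^Q * b j else 0) = _
  have h2 : max (Q+1) (Q+3) = Q + 3 := by omega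
  have h3 : min (Q+1) (Q+3) = Q + 1 := by omega
  rw [h2, h3, if_neg (by omega), if_pos ⟨rfl, rfl⟩]

theorem pval_low (b : Fin 3 → ℤ) (j : Fin 3) {i : ℕ} (h : i ≤ Q) :
    pval Q b j i = -2 * (-1)^i * b j := if_pos h

theorem pval_mid (b : Fin 3 → ℤ) (j : Fin 3) :
    pval Q b j (Q+1) = (-1)^Q * b j := by
  unfold pval
  rw [if_neg (by omega), if_pos rfl]

theorem pval_high (b : Fin 3 → ℤ) (j : Fin 3) :
    pval Q b j (Q+2) = -((-1)^Q * b j) := by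
  unfold pval
  rw [if_neg (by omega), if_neg (by omega)]

/-! ### incidence computations -/

theorem T_eq (c : ↥(SG Q).edgeSet → ℤ) (x : SV Q) (s : Finset ↥(SG Q).edgeSet)
    (h : ∀ e : ↥(SG Q).edgeSet, x ∈ (e : Sym2 (SV Q)) ↔ e ∈ s) :
    Tsum (SG Q) c x = ∑ e ∈ s, c e := by
  unfold Tsum
  have key : ∀ e : ↥(SG Q).edgeSet,
      c e * (if x ∈ (e : Sym2 (SV Q)) then (1:ℤ) else 0) = if e ∈ s then c e else 0 := by
    intro e
    by_cases he : x ∈ (e : Sym2 (SV Q))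
    · rw [if_pos he, if_pos ((h e).mp he), mul_one]
    · rw [if_neg he, if_neg (fun hs => he ((h e).mpr hs)), mul_zero]
  rw [Finset.sum_congr rfl (fun e _ => key e), Finset.sum_ite_mem, Finset.univ_inter]

theorem adj_from_mem {x : SV Q} {e : ↥(SG Q).edgeSet} (hx : x ∈ (e : Sym2 (SV Q))) :
    ∃ y, (e : Sym2 (SV Q)) = s(x, y) ∧ SAdj Q x y := by
  obtain ⟨y, hy⟩ := Sym2.mem_iff_exists.mp hx
  refine ⟨y, hy, ?_⟩
  have h2 := e.2
  rw [hy] at h2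
  exact (SimpleGraph.mem_edgeSet _).mp h2

theorem incid0 (c : ↥(SG Q).edgeSet → ℤ) (j : Fin 3) :
    Tsum (SG Q) c (vx Q j 0 (by omega))
      = c (ceE Q j) + c (ceE Q (j+2)) + c (peE Q j 0 (by omega)) := by
  rw [T_eq Q c _ ({ceE Q j, ceE Q (j+2), peE Q j 0 (by omega)} : Finset _) ?_]
  · have hne2 : ceE Q (j+2) ∉ ({peE Q j 0 (by omega)} : Finset ↥(SG Q).edgeSet) :=
      fun hmem => ceE_ne_peE Q (Finset.mem_singleton.mp hmem)
    have hne1 : ceE Q j ∉ ({ceE Q (j+2), peE Q j 0 (by omega)} : Finset ↥(SG Q).edgeSet) := by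
      intro hmem
      rcases Finset.mem_insert.mp hmem with h | h
      · exact f3e j (ceE_inj Q h)
      · exact ceE_ne_peE Q (Finset.mem_singleton.mp h)
    rw [Finset.sum_insert hne1, Finset.sum_insert hne2, Finset.sum_singleton]
    ring
  · intro e
    constructor
    · intro hx
      obtain ⟨y, hy, hadj⟩ := adj_from_mem Q hx
      unfold SAdj vx at hadj
      simp only at hadj
      rcases hadj with ⟨_, hy0, hne⟩ | ⟨hj, hcase⟩
      · rcases f3g j y.1 hne with hb | hb
        · have he : e = ceE Q j := Subtype.ext (by
            rw [hy]
            show s(_,_) = s(_,_)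
            rw [Sym2.eq_iff]
            exact Or.inl ⟨rfl, (eq_vx_iff Q).mpr ⟨hb, hy0⟩⟩)
          rw [he]
          exact Finset.mem_insert_self _ _
        · have he : e = ceE Q (j+2) := Subtype.ext (by
            rw [hy]
            show s(_,_) = s(_,_)
            rw [Sym2.eq_iff]
            exact Or.inr ⟨(eq_vx_iff Q).mpr ⟨(f3b j).symm, rfl⟩, (eq_vx_iff Q).mpr ⟨hb, hy0⟩⟩)
          rw [he]
          exact Finset.mem_insert_of_mem (Finset.mem_insert_self _ _)
      · rcases hcase with h2 | h2 | ⟨h2, _⟩ | ⟨h2, _⟩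
        · have he : e = peE Q j 0 (by omega) := Subtype.ext (by
            rw [hy]
            show s(_,_) = s(_,_)
            rw [Sym2.eq_iff]
            exact Or.inl ⟨rfl, (eq_vx_iff Q).mpr ⟨hj.symm, by omega⟩⟩)
          rw [he]
          exact Finset.mem_insert_of_mem (Finset.mem_insert_of_mem (Finset.mem_singleton_self _))
        · omega
        · omega
        · omega
    · intro hs
      rcases Finset.mem_insert.mp hs with rfl | hs
      · exact Sym2.mem_mk_left _ _
      rcases Finset.mem_insert.mp hs with rfl | hs
      · have hv : vx Q j 0 (by omega) = vx Q (j+2+1) 0 (by omega) := by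
          rw [vx_eq_iff]; exact ⟨(f3b j).symm, rfl⟩
        rw [hv]
        exact Sym2.mem_mk_right _ _
      rw [Finset.mem_singleton.mp hs]
      exact Sym2.mem_mk_left _ _

theorem incid_mid (c : ↥(SG Q).edgeSet → ℤ) (j : Fin 3) (i : ℕ) (h : i + 1 ≤ Q) :
    Tsum (SG Q) c (vx Q j (i+1) (by omega))
      = c (peE Q j i (by omega)) + c (peE Q j (i+1) (by omega)) := by
  rw [T_eq Q c _ ({peE Q j i (by omega), peE Q j (i+1) (by omega)} : Finset _) ?_]
  · have hne : peE Q j i (by omega) ∉ ({peE Q j (i+1) (by omega)} : Finset ↥(SG Q).edgeSet) := by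
      intro hmem
      have := (peE_inj Q (Finset.mem_singleton.mp hmem)).2
      omega
    rw [Finset.sum_insert hne, Finset.sum_singleton]
  · intro e
    constructor
    · intro hx
      obtain ⟨y, hy, hadj⟩ := adj_from_mem Q hx
      unfold SAdj vx at hadj
      simp only at hadj
      rcases hadj with ⟨h1, _, _⟩ | ⟨hj, hcase⟩
      · omega
      · rcases hcase with h2 | h2 | ⟨h2, _⟩ | ⟨h2, _⟩
        · have he : e = peE Q j (i+1) (by omega) := Subtype.ext (by
            rw [hy]
            show s(_,_) = s(_,_)
            rw [Sym2.eq_iff]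
            exact Or.inl ⟨rfl, (eq_vx_iff Q).mpr ⟨hj.symm, by omega⟩⟩)
          rw [he]
          exact Finset.mem_insert_of_mem (Finset.mem_singleton_self _)
        · have he : e = peE Q j i (by omega) := Subtype.ext (by
            rw [hy]
            show s(_,_) = s(_,_)
            rw [Sym2.eq_iff]
            exact Or.inr ⟨rfl, (eq_vx_iff Q).mpr ⟨hj.symm, by omega⟩⟩)
          rw [he]
          exact Finset.mem_insert_self _ _
        · omega
        · omega
    · intro hs
      rcases Finset.mem_insert.mp hs with rfl | hs
      · exact Sym2.mem_mk_right _ _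
      rw [Finset.mem_singleton.mp hs]
      exact Sym2.mem_mk_left _ _

theorem incidP (c : ↥(SG Q).edgeSet → ℤ) (j : Fin 3) :
    Tsum (SG Q) c (vx Q j (Q+1) (by omega))
      = c (peE Q j Q (by omega)) + c (peE Q j (Q+1) (by omega)) + c (leE Q j) := by
  rw [T_eq Q c _ ({peE Q j Q (by omega), peE Q j (Q+1) (by omega), leE Q j} : Finset _) ?_]
  · have hne2 : peE Q j (Q+1) (by omega) ∉ ({leE Q j} : Finset ↥(SG Q).edgeSet) :=
      fun hmem => peE_ne_leE Q (Finset.mem_singleton.mp hmem)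
    have hne1 : peE Q j Q (by omega)
        ∉ ({peE Q j (Q+1) (by omega), leE Q j} : Finset ↥(SG Q).edgeSet) := by
      intro hmem
      rcases Finset.mem_insert.mp hmem with h | h
      · have := (peE_inj Q h).2; omega
      · exact peE_ne_leE Q (Finset.mem_singleton.mp h)
    rw [Finset.sum_insert hne1, Finset.sum_insert hne2, Finset.sum_singleton]
    ring
  · intro e
    constructor
    · intro hx
      obtain ⟨y, hy, hadj⟩ := adj_from_mem Q hx
      unfold SAdj vx at hadj
      simp only at hadj
      rcases hadj with ⟨h1, _, _⟩ | ⟨hj, hcase⟩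
      · omega
      · rcases hcase with h2 | h2 | ⟨_, h2⟩ | ⟨h2, _⟩
        · have he : e = peE Q j (Q+1) (by omega) := Subtype.ext (by
            rw [hy]
            show s(_,_) = s(_,_)
            rw [Sym2.eq_iff]
            exact Or.inl ⟨rfl, (eq_vx_iff Q).mpr ⟨hj.symm, by omega⟩⟩)
          rw [he]
          exact Finset.mem_insert_of_mem (Finset.mem_insert_self _ _)
        · have he : e = peE Q j Q (by omega) := Subtype.ext (by
            rw [hy]
            show s(_,_) = s(_,_)
            rw [Sym2.eq_iff]
            exact Or.inr ⟨rfl, (eq_vx_iff Q).mpr ⟨hj.symm, by omega⟩⟩)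
          rw [he]
          exact Finset.mem_insert_self _ _
        · have he : e = leE Q j := Subtype.ext (by
            rw [hy]
            show s(_,_) = s(_,_)
            rw [Sym2.eq_iff]
            exact Or.inl ⟨rfl, (eq_vx_iff Q).mpr ⟨hj.symm, h2⟩⟩)
          rw [he]
          exact Finset.mem_insert_of_mem (Finset.mem_insert_of_mem (Finset.mem_singleton_self _))
        · omega
    · intro hs
      rcases Finset.mem_insert.mp hs with rfl | hs
      · exact Sym2.mem_mk_right _ _
      rcases Finset.mem_insert.mp hs with rfl | hs
      · exact Sym2.mem_mk_left _ _
      rw [Finset.mem_singleton.mp hs]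
      exact Sym2.mem_mk_left _ _

theorem incidP1 (c : ↥(SG Q).edgeSet → ℤ) (j : Fin 3) :
    Tsum (SG Q) c (vx Q j (Q+2) (by omega))
      = c (peE Q j (Q+1) (by omega)) + c (peE Q j (Q+2) (by omega)) := by
  rw [T_eq Q c _ ({peE Q j (Q+1) (by omega), peE Q j (Q+2) (by omega)} : Finset _) ?_]
  · have hne : peE Q j (Q+1) (by omega)
        ∉ ({peE Q j (Q+2) (by omega)} : Finset ↥(SG Q).edgeSet) := by
      intro hmem
      have := (peE_inj Q (Finset.mem_singleton.mp hmem)).2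
      omega
    rw [Finset.sum_insert hne, Finset.sum_singleton]
  · intro e
    constructor
    · intro hx
      obtain ⟨y, hy, hadj⟩ := adj_from_mem Q hx
      unfold SAdj vx at hadj
      simp only at hadj
      rcases hadj with ⟨h1, _, _⟩ | ⟨hj, hcase⟩
      · omega
      · rcases hcase with h2 | h2 | ⟨h2, _⟩ | ⟨h2, _⟩
        · have he : e = peE Q j (Q+2) (by omega) := Subtype.ext (by
            rw [hy]
            show s(_,_) = s(_,_)
            rw [Sym2.eq_iff]
            exact Or.inl ⟨rfl, (eq_vx_iff Q).mpr ⟨hj.symm, by omega⟩⟩)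
          rw [he]
          exact Finset.mem_insert_of_mem (Finset.mem_singleton_self _)
        · have he : e = peE Q j (Q+1) (by omega) := Subtype.ext (by
            rw [hy]
            show s(_,_) = s(_,_)
            rw [Sym2.eq_iff]
            exact Or.inr ⟨rfl, (eq_vx_iff Q).mpr ⟨hj.symm, by omega⟩⟩)
          rw [he]
          exact Finset.mem_insert_self _ _
        · omega
        · omega
    · intro hs
      rcases Finset.mem_insert.mp hs with rfl | hs
      · exact Sym2.mem_mk_right _ _
      rw [Finset.mem_singleton.mp hs]
      exact Sym2.mem_mk_left _ _

theorem incidP2 (c : ↥(SG Q).edgeSet → ℤ) (j : Fin 3) :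
    Tsum (SG Q) c (vx Q j (Q+3) (by omega))
      = c (peE Q j (Q+2) (by omega)) + c (leE Q j) := by
  rw [T_eq Q c _ ({peE Q j (Q+2) (by omega), leE Q j} : Finset _) ?_]
  · have hne : peE Q j (Q+2) (by omega) ∉ ({leE Q j} : Finset ↥(SG Q).edgeSet) :=
      fun hmem => peE_ne_leE Q (Finset.mem_singleton.mp hmem)
    rw [Finset.sum_insert hne, Finset.sum_singleton]
  · intro e
    constructor
    · intro hx
      obtain ⟨y, hy, hadj⟩ := adj_from_mem Q hx
      unfold SAdj vx at hadj
      simp only at hadj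
      rcases hadj with ⟨h1, _, _⟩ | ⟨hj, hcase⟩
      · omega
      · rcases hcase with h2 | h2 | ⟨h2, _⟩ | ⟨_, h2⟩
        · have := y.2.isLt; omega
        · have he : e = peE Q j (Q+2) (by omega) := Subtype.ext (by
            rw [hy]
            show s(_,_) = s(_,_)
            rw [Sym2.eq_iff]
            exact Or.inr ⟨rfl, (eq_vx_iff Q).mpr ⟨hj.symm, by omega⟩⟩)
          rw [he]
          exact Finset.mem_insert_self _ _
        · omega
        · have he : e = leE Q j := Subtype.ext (by
            rw [hy]
            show s(_,_) = s(_,_)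
            rw [Sym2.eq_iff]
            exact Or.inr ⟨rfl, (eq_vx_iff Q).mpr ⟨hj.symm, h2⟩⟩)
          rw [he]
          exact Finset.mem_insert_of_mem (Finset.mem_singleton_self _)
    · intro hs
      rcases Finset.mem_insert.mp hs with rfl | hs
      · exact Sym2.mem_mk_right _ _
      rw [Finset.mem_singleton.mp hs]
      exact Sym2.mem_mk_right _ _

theorem Tsum_cvec (b : Fin 3 → ℤ) (x : SV Q) : Tsum (SG Q) (cvec Q b) x = 0 := by
  obtain ⟨j, i⟩ := x
  have hcase : i.val = 0 ∨ (1 ≤ i.val ∧ i.val ≤ Q) ∨ i.val = Q+1 ∨ i.val = Q+2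
      ∨ i.val = Q+3 := by
    have := i.isLt
    omega
  rcases hcase with h | ⟨h1, h2⟩ | h | h | h
  · have hx : ((j, i) : SV Q) = vx Q j 0 (by omega) := (eq_vx_iff Q).mpr ⟨rfl, h⟩
    rw [hx, incid0, cvec_ce, cvec_ce, cvec_pe, pval_low Q b j (by omega), f3b, f3c]
    ring
  · set k := i.val - 1 with hkdef
    have hk : i.val = k + 1 := by omega
    have hkQ : k + 1 ≤ Q := by omega
    have hx : ((j, i) : SV Q) = vx Q j (k+1) (by omega) := (eq_vx_iff Q).mpr ⟨rfl, hk⟩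
    rw [hx, incid_mid Q _ j k hkQ, cvec_pe, cvec_pe, pval_low Q b j (by omega),
      pval_low Q b j (by omega), pow_succ]
    ring
  · have hx : ((j, i) : SV Q) = vx Q j (Q+1) (by omega) := (eq_vx_iff Q).mpr ⟨rfl, h⟩
    rw [hx, incidP, cvec_pe, cvec_pe, cvec_le, pval_low Q b j (by omega), pval_mid]
    ring
  · have hx : ((j, i) : SV Q) = vx Q j (Q+2) (by omega) := (eq_vx_iff Q).mpr ⟨rfl, h⟩
    rw [hx, incidP1, cvec_pe, cvec_pe, pval_mid, pval_high]
    ring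
  · have hx : ((j, i) : SV Q) = vx Q j (Q+3) (by omega) := (eq_vx_iff Q).mpr ⟨rfl, h⟩
    rw [hx, incidP2, cvec_pe, cvec_le, pval_high]
    ring

theorem f3j : ∀ j : Fin 3, j + 1 + 2 = j := by decide

theorem kernel_eq_cvec (c : ↥(SG Q).edgeSet → ℤ) (hc : ∀ x, Tsum (SG Q) c x = 0) :
    c = cvec Q (fun j => (-1)^Q * c (leE Q j)) := by
  set b : Fin 3 → ℤ := fun j => (-1)^Q * c (leE Q j) with hb
  have hee : ((-1:ℤ))^Q * (-1)^Q = 1 := by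
    rw [← pow_add, ← two_mul, pow_mul]
    norm_num
  have hle : ∀ j, c (leE Q j) = (-1)^Q * b j := by
    intro j
    rw [hb]
    show c (leE Q j) = (-1)^Q * ((-1)^Q * c (leE Q j))
    rw [← mul_assoc, hee, one_mul]
  have hpe2 : ∀ j, c (peE Q j (Q+2) (by omega)) = -((-1)^Q * b j) := by
    intro j
    have h := hc (vx Q j (Q+3) (by omega))
    rw [incidP2] at h
    rw [hle j] at h
    linarith
  have hpe1 : ∀ j, c (peE Q j (Q+1) (by omega)) = (-1)^Q * b j := by
    intro j
    have h := hc (vx Q j (Q+2) (by omega))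
    rw [incidP1] at h
    rw [hpe2 j] at h
    linarith
  have claim : ∀ k i, i + k = Q → ∀ (hi : i < Q+3) (j : Fin 3),
      c (peE Q j i hi) = -2 * (-1)^i * b j := by
    intro k
    induction k with
    | zero =>
      intro i hik hi j
      have hiQ : Q = i := by omega
      subst hiQ
      have h := hc (vx Q j (Q+1) (by omega))
      rw [incidP] at h
      rw [hpe1 j, hle j] at h
      linarith
    | succ k ih =>
      intro i hik hi j
      have h := hc (vx Q j (i+1) (by omega))
      rw [incid_mid Q c j i (by omega)] at h
      have h2 := ih (i+1) (by omega) (by omega) j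
      rw [h2] at h
      have h3 : (-1:ℤ)^(i+1) = -((-1)^i) := by rw [pow_succ]; ring
      rw [h3] at h
      linarith
  have hA : ∀ j, c (ceE Q j) + c (ceE Q (j+2)) = 2 * b j := by
    intro j
    have h := hc (vx Q j 0 (by omega))
    rw [incid0] at h
    have h0 := claim Q 0 (by omega) (by omega) j
    rw [pow_zero] at h0
    rw [h0] at h
    linarith
  have hce : ∀ j, c (ceE Q j) = b j + b (j+1) - b (j+2) := by
    intro j
    have e1 := hA j
    have e2 := hA (j+1)
    have e3 := hA (j+2)
    rw [f3j] at e2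
    rw [f3c] at e3
    omega
  funext e
  rcases edge_classify Q e with ⟨j, rfl⟩ | ⟨j, i, h, rfl⟩ | ⟨j, rfl⟩
  · rw [cvec_ce]
    exact hce j
  · rw [cvec_pe]
    by_cases hi : i ≤ Q
    · rw [pval_low Q _ j hi]
      exact claim (Q - i) i (by omega) h j
    · by_cases hi1 : i = Q+1
      · subst hi1
        rw [pval_mid]
        exact hpe1 j
      · have hi2 : i = Q+2 := by omega
        subst hi2
        rw [pval_high]
        exact hpe2 j
  · rw [cvec_le]
    exact hle j

/-! ### summing over all edges -/

def emap : (Fin 3 × Fin (Q+3)) ⊕ (Fin 3 ⊕ Fin 3) → ↥(SG Q).edgeSet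
  | Sum.inl (j, i) => peE Q j i.val i.isLt
  | Sum.inr (Sum.inl j) => ceE Q j
  | Sum.inr (Sum.inr j) => leE Q j

theorem emap_bij : Function.Bijective (emap Q) := by
  constructor
  · rintro (⟨j, i⟩ | j | j) (⟨j', i'⟩ | j' | j') h <;> simp only [emap] at h
    · obtain ⟨h1, h2⟩ := peE_inj Q h
      rw [h1, Fin.ext h2]
    · exact absurd h.symm (ceE_ne_peE Q)
    · exact absurd h (peE_ne_leE Q)
    · exact absurd h (ceE_ne_peE Q)
    · rw [ceE_inj Q h]
    · exact absurd h (ceE_ne_leE Q)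
    · exact absurd h.symm (peE_ne_leE Q)
    · exact absurd h.symm (ceE_ne_leE Q)
    · rw [leE_inj Q h]
  · intro e
    rcases edge_classify Q e with ⟨j, rfl⟩ | ⟨j, i, h, rfl⟩ | ⟨j, rfl⟩
    · exact ⟨Sum.inr (Sum.inl j), rfl⟩
    · exact ⟨Sum.inl (j, ⟨i, h⟩), rfl⟩
    · exact ⟨Sum.inr (Sum.inr j), rfl⟩

theorem sum_edges (f : ↥(SG Q).edgeSet → ℤ) :
    ∑ e, f e = ∑ j : Fin 3,
      ((∑ i : Fin (Q+3), f (peE Q j i.val i.isLt)) + f (ceE Q j) + f (leE Q j)) := by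
  rw [← Fintype.sum_bijective (emap Q) (emap_bij Q) (fun x => f (emap Q x)) f (fun x => rfl)]
  rw [Fintype.sum_sum_type, Fintype.sum_prod_type, Fintype.sum_sum_type]
  simp only [emap]
  conv_rhs => rw [Finset.sum_add_distrib, Finset.sum_add_distrib]
  ring

theorem pval_eq_zero_iff (b : Fin 3 → ℤ) (j : Fin 3) (i : ℕ) :
    pval Q b j i = 0 ↔ b j = 0 := by
  have hpow : ((-1:ℤ))^i ≠ 0 := pow_ne_zero _ (by norm_num)
  have hpowQ : ((-1:ℤ))^Q ≠ 0 := pow_ne_zero _ (by norm_num)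
  unfold pval
  split_ifs
  · constructor
    · intro h
      rcases mul_eq_zero.mp h with h | h
      · exact absurd h (mul_ne_zero (by norm_num) hpow)
      · exact h
    · intro h
      rw [h, mul_zero]
  · constructor
    · intro h
      rcases mul_eq_zero.mp h with h | h
      · exact absurd h hpowQ
      · exact h
    · intro h
      rw [h, mul_zero]
  · rw [neg_eq_zero]
    constructor
    · intro h
      rcases mul_eq_zero.mp h with h | h
      · exact absurd h hpowQ
      · exact h
    · intro h
      rw [h, mul_zero]

theorem abs_pval (b : Fin 3 → ℤ) (j : Fin 3) {i : ℕ} (h : i ≤ Q) :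
    |pval Q b j i| = 2 * |b j| := by
  rw [pval_low Q b j h, abs_mul, abs_mul]
  simp [abs_pow]

theorem abs_neg_one_pow (n : ℕ) : |(-1:ℤ)^n| = 1 := by
  rw [abs_pow]
  simp

theorem sum_abs_cvec (b : Fin 3 → ℤ) :
    ∑ e, |cvec Q b e| = (2*Q+5) * (|b 0| + |b 1| + |b 2|)
      + (|b 0 + b 1 - b 2| + |b 1 + b 2 - b 0| + |b 2 + b 0 - b 1|) := by
  rw [sum_edges]
  have harm : ∀ j : Fin 3,
      (∑ i : Fin (Q+3), |cvec Q b (peE Q j i.val i.isLt)|) = (2*Q+4) * |b j| := by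
    intro j
    have h1 : ∀ i : Fin (Q+3), |cvec Q b (peE Q j i.val i.isLt)| = |pval Q b j i.val| :=
      fun i => by rw [cvec_pe]
    rw [Finset.sum_congr rfl (fun i _ => h1 i),
      Fin.sum_univ_eq_sum_range (fun i => |pval Q b j i|) (Q+3),
      Finset.sum_range_succ, Finset.sum_range_succ]
    have h2 : ∀ i ∈ Finset.range (Q+1), |pval Q b j i| = 2 * |b j| := by
      intro i hi
      rw [Finset.mem_range] at hi
      exact abs_pval Q b j (by omega)
    rw [Finset.sum_congr rfl h2, Finset.sum_const, Finset.card_range, pval_mid, pval_high,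
      abs_neg, abs_mul, abs_neg_one_pow, one_mul]
    push_cast
    ring
  have hj : ∀ j : Fin 3,
      ((∑ i : Fin (Q+3), |cvec Q b (peE Q j i.val i.isLt)|) + |cvec Q b (ceE Q j)|
        + |cvec Q b (leE Q j)|)
      = (2*Q+5) * |b j| + |b j + b (j+1) - b (j+2)| := by
    intro j
    rw [harm j, cvec_ce, cvec_le, abs_mul, abs_neg_one_pow, one_mul]
    ring
  rw [Finset.sum_congr rfl (fun j _ => hj j), Fin.sum_univ_three]
  have e1 : ((0:Fin 3)+1) = 1 := rfl
  have e2 : ((0:Fin 3)+2) = 2 := rfl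
  have e3 : ((1:Fin 3)+1) = 2 := rfl
  have e4 : ((1:Fin 3)+2) = 0 := rfl
  have e5 : ((2:Fin 3)+1) = 0 := rfl
  have e6 : ((2:Fin 3)+2) = 1 := rfl
  rw [e1, e2, e3, e4, e5, e6]
  ring

/-! ### the binomial attached to a kernel vector -/

section WithField

variable {K : Type*} [Field K]

def uOf (b : Fin 3 → ℤ) : ↥(SG Q).edgeSet →₀ ℕ :=
  Finsupp.equivFunOnFinite.symm fun e => (cvec Q b e).toNat

def vOf (b : Fin 3 → ℤ) : ↥(SG Q).edgeSet →₀ ℕ :=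
  Finsupp.equivFunOnFinite.symm fun e => (-cvec Q b e).toNat

theorem uOf_apply (b : Fin 3 → ℤ) (e : ↥(SG Q).edgeSet) :
    uOf Q b e = (cvec Q b e).toNat := rfl

theorem vOf_apply (b : Fin 3 → ℤ) (e : ↥(SG Q).edgeSet) :
    vOf Q b e = (-cvec Q b e).toNat := rfl

theorem uvOf_ne {b : Fin 3 → ℤ} (hne : ∃ e, cvec Q b e ≠ 0) : uOf Q b ≠ vOf Q b := by
  obtain ⟨e, he⟩ := hne
  intro h
  have h2 : uOf Q b e = vOf Q b e := by rw [h]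
  rw [uOf_apply, vOf_apply] at h2
  omega

theorem mem_uvOf (b : Fin 3 → ℤ) :
    binom K (uOf Q b) (vOf Q b) ∈ graphToricIdeal K (SG Q) := by
  rw [binom_mem_iff_Tsum]
  intro x
  have h : (fun e : ↥(SG Q).edgeSet => ((uOf Q b) e : ℤ) - (vOf Q b) e) = cvec Q b := by
    funext e
    rw [uOf_apply, vOf_apply]
    omega
  rw [h]
  exact Tsum_cvec Q b x

theorem mem_vars_uvOf {b : Fin 3 → ℤ} (hne : ∃ e, cvec Q b e ≠ 0)
    (e : ↥(SG Q).edgeSet) :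
    e ∈ (binom K (uOf Q b) (vOf Q b)).vars ↔ cvec Q b e ≠ 0 := by
  rw [binom_vars (uvOf_ne Q hne), Finset.mem_union, Finsupp.mem_support_iff,
    Finsupp.mem_support_iff, uOf_apply, vOf_apply]
  omega

theorem deg_uvOf {b : Fin 3 → ℤ} (hne : ∃ e, cvec Q b e ≠ 0) :
    2 * ((binom K (uOf Q b) (vOf Q b)).totalDegree : ℤ) = ∑ e, |cvec Q b e| := by
  rw [binom_totalDegree (uvOf_ne Q hne)]
  rw [Finsupp.sum_fintype _ _ (fun _ => rfl), Finsupp.sum_fintype _ _ (fun _ => rfl)]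
  have hz : ∑ e, cvec Q b e = 0 :=
    sum_eq_zero_of_Tsum (SG Q) (cvec Q b) (Tsum_cvec Q b)
  have hsplit : ∀ e : ↥(SG Q).edgeSet,
      |cvec Q b e| = ((uOf Q b e : ℤ)) + ((vOf Q b e : ℤ)) := by
    intro e
    rw [uOf_apply, vOf_apply, Int.abs_eq_natAbs]
    omega
  have habs : ∑ e, |cvec Q b e| = (∑ e, ((uOf Q b e : ℤ)))
      + (∑ e, ((vOf Q b e : ℤ))) := by
    rw [Finset.sum_congr rfl (fun e _ => hsplit e), Finset.sum_add_distrib]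
  have hdiff : (∑ e, ((uOf Q b e : ℤ))) - (∑ e, ((vOf Q b e : ℤ))) = 0 := by
    rw [← Finset.sum_sub_distrib]
    rw [Finset.sum_congr rfl (fun e _ => by rw [uOf_apply, vOf_apply]; omega :
      ∀ e ∈ Finset.univ, ((uOf Q b e : ℤ)) - ((vOf Q b e : ℤ)) = cvec Q b e)]
    exact hz
  have hcast1 : ((∑ e, uOf Q b e : ℕ) : ℤ) = ∑ e, ((uOf Q b e : ℤ)) := by push_cast; rfl
  have hcast2 : ((∑ e, vOf Q b e : ℕ) : ℤ) = ∑ e, ((vOf Q b e : ℤ)) := by push_cast; rfl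
  have hsums : (∑ e, uOf Q b e) = (∑ e, vOf Q b e) := by omega
  rw [hsums, max_self, hcast2]
  omega

theorem cvec_eq_zero {b : Fin 3 → ℤ} (hb : ∀ j, b j = 0) (e : ↥(SG Q).edgeSet) :
    cvec Q b e = 0 := by
  rcases edge_classify Q e with ⟨j, rfl⟩ | ⟨j, i, h, rfl⟩ | ⟨j, rfl⟩
  · rw [cvec_ce, hb, hb, hb]; ring
  · rw [cvec_pe, (pval_eq_zero_iff Q b j i).mpr (hb j)]
  · rw [cvec_le, hb]; ring

theorem cvec_smul (p : ℤ) (b1 : Fin 3 → ℤ) (e : ↥(SG Q).edgeSet) :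
    cvec Q (fun j => p * b1 j) e = p * cvec Q b1 e := by
  rcases edge_classify Q e with ⟨j, rfl⟩ | ⟨j, i, h, rfl⟩ | ⟨j, rfl⟩
  · rw [cvec_ce, cvec_ce]; ring
  · rw [cvec_pe, cvec_pe]
    unfold pval
    split_ifs <;> ring
  · rw [cvec_le, cvec_le]; ring

theorem cvec_congr {b b' : Fin 3 → ℤ} (h : ∀ j, b j = b' j) : cvec Q b = cvec Q b' := by
  have : b = b' := funext h
  rw [this]

/-- a circuit binomial cannot be a proper multiple -/
theorem not_multiple {b : Fin 3 → ℤ}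
    (hne : uOf Q b ≠ vOf Q b)
    (hmem : binom K (uOf Q b) (vOf Q b) ∈ graphToricIdeal K (SG Q))
    (hirr : Irreducible (binom K (uOf Q b) (vOf Q b)))
    {p : ℤ} {b1 : Fin 3 → ℤ} (hb : ∀ j, b j = p * b1 j) (hp : 2 ≤ p.natAbs) : False := by
  have hbe : ∀ e, cvec Q b e = p * cvec Q b1 e := by
    intro e
    rw [cvec_congr Q hb, cvec_smul]
  have toNat_mul_nonneg : ∀ {q : ℤ}, 0 ≤ q → ∀ x : ℤ, (q * x).toNat = q.natAbs * x.toNat := by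
    intro q hq x
    rcases le_or_gt 0 x with hx | hx
    · have h1 : 0 ≤ q * x := mul_nonneg hq hx
      have h2 : ((q*x).toNat : ℤ) = q * x := Int.toNat_of_nonneg h1
      have h3 : (x.toNat : ℤ) = x := Int.toNat_of_nonneg hx
      have h4 : (q.natAbs : ℤ) = q := Int.natAbs_of_nonneg hq
      have h5 : ((q.natAbs * x.toNat : ℕ) : ℤ) = q * x := by rw [Nat.cast_mul, h3, h4]
      omega
    · have h1 : q * x ≤ 0 := mul_nonpos_of_nonneg_of_nonpos hq hx.le
      have h2 : (q*x).toNat = 0 := Int.toNat_of_nonpos h1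
      have h3 : x.toNat = 0 := Int.toNat_of_nonpos hx.le
      rw [h2, h3, mul_zero]
  rcases le_or_gt 0 p with hp0 | hp0
  · -- p ≥ 2
    have hu : uOf Q b = p.natAbs • uOf Q b1 := by
      ext e
      rw [Finsupp.smul_apply, smul_eq_mul, uOf_apply, uOf_apply, hbe e,
        toNat_mul_nonneg hp0]
    have hv : vOf Q b = p.natAbs • vOf Q b1 := by
      ext e
      rw [Finsupp.smul_apply, smul_eq_mul, vOf_apply, vOf_apply, hbe e, ← mul_neg,
        toNat_mul_nonneg hp0]
    exact not_smul_of_irreducible (SG Q) hne hmem hirr hp hu hv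
  · have hp' : (0:ℤ) ≤ -p := by omega
    have key : ∀ x : ℤ, (p * x).toNat = p.natAbs * (-x).toNat := by
      intro x
      have h1 : p * x = (-p) * (-x) := by ring
      rw [h1, toNat_mul_nonneg hp', Int.natAbs_neg]
    have hu : uOf Q b = p.natAbs • vOf Q b1 := by
      ext e
      rw [Finsupp.smul_apply, smul_eq_mul, uOf_apply, vOf_apply, hbe e, key]
    have hv : vOf Q b = p.natAbs • uOf Q b1 := by
      ext e
      rw [Finsupp.smul_apply, smul_eq_mul, vOf_apply, uOf_apply, hbe e, ← mul_neg, key,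
        neg_neg]
    exact not_smul_of_irreducible (SG Q) hne hmem hirr hp hu hv

/-- a circuit binomial's support is minimal: helper to derive contradictions -/
theorem min_contra {b : Fin 3 → ℤ}
    (hne : ∃ e, cvec Q b e ≠ 0)
    (hmin : ∀ g : MvPolynomial ↥(SG Q).edgeSet K,
      (∃ u' v' : ↥(SG Q).edgeSet →₀ ℕ, u' ≠ v' ∧ g = binom K u' v') →
      g ∈ graphToricIdeal K (SG Q) →
      g.vars ⊆ (binom K (uOf Q b) (vOf Q b)).vars →
      g.vars = (binom K (uOf Q b) (vOf Q b)).vars)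
    (b1 : Fin 3 → ℤ)
    (hne1 : ∃ e, cvec Q b1 e ≠ 0)
    (hsub : ∀ e, cvec Q b1 e ≠ 0 → cvec Q b e ≠ 0)
    (hstrict : ∃ e, cvec Q b e ≠ 0 ∧ cvec Q b1 e = 0) : False := by
  have h1 := hmin (binom K (uOf Q b1) (vOf Q b1))
    ⟨uOf Q b1, vOf Q b1, uvOf_ne Q hne1, rfl⟩ (mem_uvOf Q b1) ?_
  · obtain ⟨e, hce, hc1e⟩ := hstrict
    have h2 : e ∈ (binom K (uOf Q b1) (vOf Q b1)).vars := by
      rw [h1]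
      exact (mem_vars_uvOf Q hne e).mpr hce
    rw [mem_vars_uvOf Q hne1 e] at h2
    exact h2 hc1e
  · intro e he
    rw [mem_vars_uvOf Q hne1 e] at he
    exact (mem_vars_uvOf Q hne e).mpr (hsub e he)

/-! ### patterns and cyclic index facts -/

theorem g01 : ((0:Fin 3)+1) = 1 := rfl
theorem g02 : ((0:Fin 3)+2) = 2 := rfl
theorem g11 : ((1:Fin 3)+1) = 2 := rfl
theorem g12 : ((1:Fin 3)+2) = 0 := rfl
theorem g21 : ((2:Fin 3)+1) = 0 := rfl
theorem g22 : ((2:Fin 3)+2) = 1 := rfl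
theorem f3span : ∀ j k : Fin 3, j = k ∨ j = k+1 ∨ j = k+2 := by decide

theorem fin3_eq (k : Fin 3) : k = 0 ∨ k = 1 ∨ k = 2 := by
  have h := k.isLt
  rcases (by omega : k.val = 0 ∨ k.val = 1 ∨ k.val = 2) with h3 | h3 | h3
  · exact Or.inl (Fin.ext h3)
  · exact Or.inr (Or.inl (Fin.ext h3))
  · exact Or.inr (Or.inr (Fin.ext h3))

theorem cyc_abs (b : Fin 3 → ℤ) (k : Fin 3) :
    |b 0| + |b 1| + |b 2| = |b k| + |b (k+1)| + |b (k+2)| := by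
  rcases fin3_eq k with rfl | rfl | rfl <;> simp only [g01, g02, g11, g12, g21, g22] <;> ring

theorem cyc_cent (b : Fin 3 → ℤ) (k : Fin 3) :
    |b 0 + b 1 - b 2| + |b 1 + b 2 - b 0| + |b 2 + b 0 - b 1|
      = |b k + b (k+1) - b (k+2)| + |b (k+1) + b (k+2) - b k|
        + |b (k+2) + b k - b (k+1)| := by
  rcases fin3_eq k with rfl | rfl | rfl <;> simp only [g01, g02, g11, g12, g21, g22] <;> ring

def pat (k : Fin 3) : Fin 3 → ℤ := fun j => if j = k then 0 else 1
def patm (k : Fin 3) : Fin 3 → ℤ := fun j => if j = k then 0 else if j = k+1 then 1 else -1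
def pate (k : Fin 3) : Fin 3 → ℤ := fun j => if j = k then 1 else 0

theorem pat_k (k : Fin 3) : pat k k = 0 := if_pos rfl
theorem pat_k1 (k : Fin 3) : pat k (k+1) = 1 := if_neg (Ne.symm (f3d k))
theorem pat_k2 (k : Fin 3) : pat k (k+2) = 1 := if_neg (Ne.symm (f3e k))
theorem patm_k (k : Fin 3) : patm k k = 0 := if_pos rfl
theorem patm_k1 (k : Fin 3) : patm k (k+1) = 1 := by
  unfold patm
  rw [if_neg (Ne.symm (f3d k)), if_pos rfl]
theorem patm_k2 (k : Fin 3) : patm k (k+2) = -1 := by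
  unfold patm
  rw [if_neg (Ne.symm (f3e k)), if_neg (fun h => f3f k h.symm)]
theorem pate_k (k : Fin 3) : pate k k = 1 := if_pos rfl
theorem pate_k1 (k : Fin 3) : pate k (k+1) = 0 := if_neg (Ne.symm (f3d k))
theorem pate_k2 (k : Fin 3) : pate k (k+2) = 0 := if_neg (Ne.symm (f3e k))

section WithField2

variable {K : Type*} [Field K]

theorem hsub_generic {b b1 : Fin 3 → ℤ}
    (harm : ∀ j, b1 j ≠ 0 → b j ≠ 0)
    (hcent : ∀ j, cvec Q b1 (ceE Q j) ≠ 0 → cvec Q b (ceE Q j) ≠ 0) :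
    ∀ e, cvec Q b1 e ≠ 0 → cvec Q b e ≠ 0 := by
  intro e he
  rcases edge_classify Q e with ⟨j, rfl⟩ | ⟨j, i, h, rfl⟩ | ⟨j, rfl⟩
  · exact hcent j he
  · rw [cvec_pe] at he ⊢
    have hb1 : b1 j ≠ 0 := fun hz => he ((pval_eq_zero_iff Q b1 j i).mpr hz)
    exact fun hz => (harm j hb1) ((pval_eq_zero_iff Q b j i).mp hz)
  · rw [cvec_le] at he ⊢
    have hb1 : b1 j ≠ 0 := by
      intro hz
      apply he
      rw [hz, mul_zero]
    intro hz
    rcases mul_eq_zero.mp hz with hz | hz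
    · exact absurd hz (pow_ne_zero _ (by norm_num))
    · exact harm j hb1 hz

theorem natAbs_eq_one {b : Fin 3 → ℤ}
    (hne : uOf Q b ≠ vOf Q b)
    (hmem : binom K (uOf Q b) (vOf Q b) ∈ graphToricIdeal K (SG Q))
    (hirr : Irreducible (binom K (uOf Q b) (vOf Q b)))
    {p : ℤ} {b1 : Fin 3 → ℤ} (hb : ∀ j, b j = p * b1 j) (hp : p ≠ 0) : |p| = 1 := by
  have h1 : p.natAbs ≤ 1 := by
    by_contra h
    exact not_multiple Q hne hmem hirr hb (by omega)
  rw [Int.abs_eq_natAbs]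
  omega

/-- the center-entry values relative to `k` -/
theorem cvec_ce_k (b : Fin 3 → ℤ) (k : Fin 3) :
    cvec Q b (ceE Q k) = b k + b (k+1) - b (k+2) := cvec_ce Q b k

theorem cvec_ce_k1 (b : Fin 3 → ℤ) (k : Fin 3) :
    cvec Q b (ceE Q (k+1)) = b (k+1) + b (k+2) - b k := by
  rw [cvec_ce, f3a, f3j]

theorem cvec_ce_k2 (b : Fin 3 → ℤ) (k : Fin 3) :
    cvec Q b (ceE Q (k+2)) = b (k+2) + b k - b (k+1) := by
  rw [cvec_ce, f3b, f3c]

theorem case_two_arm {b : Fin 3 → ℤ} (k : Fin 3)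
    (hk : b k = 0) (h1 : b (k+1) ≠ 0) (h2 : b (k+2) ≠ 0)
    (hneb : ∃ e, cvec Q b e ≠ 0)
    (hne : uOf Q b ≠ vOf Q b)
    (hmem : binom K (uOf Q b) (vOf Q b) ∈ graphToricIdeal K (SG Q))
    (hirr : Irreducible (binom K (uOf Q b) (vOf Q b)))
    (hmin : ∀ g : MvPolynomial ↥(SG Q).edgeSet K,
      (∃ u' v' : ↥(SG Q).edgeSet →₀ ℕ, u' ≠ v' ∧ g = binom K u' v') →
      g ∈ graphToricIdeal K (SG Q) →
      g.vars ⊆ (binom K (uOf Q b) (vOf Q b)).vars →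
      g.vars = (binom K (uOf Q b) (vOf Q b)).vars) :
    ∑ e, |cvec Q b e| ≤ 4*Q + 14 := by
  rw [sum_abs_cvec, cyc_abs (fun j => b j) k, cyc_cent b k]
  by_cases hq : b (k+2) = b (k+1)
  · -- multiple of pat k
    have hb : ∀ j, b j = b (k+1) * pat k j := by
      intro j
      rcases f3span j k with rfl | rfl | rfl
      · rw [pat_k, hk, mul_zero]
      · rw [pat_k1, mul_one]
      · rw [pat_k2, mul_one, hq]
    have habs : |b (k+1)| = 1 := natAbs_eq_one Q hne hmem hirr hb h1
    have c1 : |b k + b (k+1) - b (k+2)| = 0 := by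
      rw [hk, hq]
      simp
    have c2 : |b (k+1) + b (k+2) - b k| = 2 := by
      rw [hk, hq]
      have h3 : b (k+1) + b (k+1) - 0 = 2 * b (k+1) := by ring
      rw [h3, abs_mul, habs]
      norm_num
    have c3 : |b (k+2) + b k - b (k+1)| = 0 := by
      rw [hk, hq]
      simp
    have habs2 : |b (k+2)| = 1 := by rw [hq, habs]
    rw [c1, c2, c3, habs, habs2, hk, abs_zero]
    ring_nf
    omega
  · by_cases hq' : b (k+2) = -(b (k+1))
    · -- multiple of patm k
      have hb : ∀ j, b j = b (k+1) * patm k j := by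
        intro j
        rcases f3span j k with rfl | rfl | rfl
        · rw [patm_k, hk, mul_zero]
        · rw [patm_k1, mul_one]
        · rw [patm_k2, hq']
          ring
      have habs : |b (k+1)| = 1 := natAbs_eq_one Q hne hmem hirr hb h1
      have c1 : |b k + b (k+1) - b (k+2)| = 2 := by
        rw [hk, hq']
        have h3 : (0:ℤ) + b (k+1) - -(b (k+1)) = 2 * b (k+1) := by ring
        rw [h3, abs_mul, habs]
        norm_num
      have c2 : |b (k+1) + b (k+2) - b k| = 0 := by
        rw [hk, hq']
        simp
      have c3 : |b (k+2) + b k - b (k+1)| = 2 := by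
        rw [hk, hq']
        have h3 : -(b (k+1)) + (0:ℤ) - b (k+1) = 2 * (-(b (k+1))) := by ring
        rw [h3, abs_mul, abs_neg, habs]
        norm_num
      have habs2 : |b (k+2)| = 1 := by rw [hq', abs_neg, habs]
      rw [c1, c2, c3, habs, habs2, hk, abs_zero]
      ring_nf
      omega
    · -- minimality contradiction with pat k
      exfalso
      apply min_contra Q hneb hmin (pat k)
      · refine ⟨leE Q (k+1), ?_⟩
        rw [cvec_le, pat_k1, mul_one]
        exact pow_ne_zero _ (by norm_num)
      · refine hsub_generic Q ?_ ?_
        · intro j hj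
          rcases f3span j k with rfl | rfl | rfl
          · rw [pat_k] at hj
            exact absurd rfl hj
          · exact h1
          · exact h2
        · intro j hj
          rcases f3span j k with rfl | rfl | rfl
          · rw [cvec_ce_k Q (pat j) j, pat_k, pat_k1, pat_k2] at hj
            norm_num at hj
          · rw [cvec_ce_k1 Q (pat k) k, pat_k, pat_k1, pat_k2] at hj
            rw [cvec_ce_k1 Q b k, hk]
            intro h3
            apply hq'
            omega
          · rw [cvec_ce_k2 Q (pat k) k, pat_k, pat_k1, pat_k2] at hj
            norm_num at hj
      · refine ⟨ceE Q k, ?_, ?_⟩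
        · rw [cvec_ce_k Q b k, hk]
          intro h3
          apply hq
          omega
        · rw [cvec_ce_k Q (pat k) k, pat_k, pat_k1, pat_k2]
          norm_num

theorem case_one_arm {b : Fin 3 → ℤ} (k : Fin 3)
    (hk : b k ≠ 0) (h1 : b (k+1) = 0) (h2 : b (k+2) = 0)
    (hne : uOf Q b ≠ vOf Q b)
    (hmem : binom K (uOf Q b) (vOf Q b) ∈ graphToricIdeal K (SG Q))
    (hirr : Irreducible (binom K (uOf Q b) (vOf Q b))) :
    ∑ e, |cvec Q b e| ≤ 4*Q + 14 := by
  rw [sum_abs_cvec, cyc_abs (fun j => b j) k, cyc_cent b k]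
  have hb : ∀ j, b j = b k * pate k j := by
    intro j
    rcases f3span j k with rfl | rfl | rfl
    · rw [pate_k, mul_one]
    · rw [pate_k1, mul_zero, h1]
    · rw [pate_k2, mul_zero, h2]
  have habs : |b k| = 1 := natAbs_eq_one Q hne hmem hirr hb hk
  have c1 : |b k + b (k+1) - b (k+2)| = 1 := by rw [h1, h2]; simpa using habs
  have c2 : |b (k+1) + b (k+2) - b k| = 1 := by
    rw [h1, h2]
    simpa [abs_neg] using habs
  have c3 : |b (k+2) + b k - b (k+1)| = 1 := by rw [h1, h2]; simpa using habs
  rw [c1, c2, c3, habs, h1, h2, abs_zero]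
  ring_nf
  omega

theorem case_three_arm {b : Fin 3 → ℤ}
    (h0 : b 0 ≠ 0) (h1 : b 1 ≠ 0) (h2 : b 2 ≠ 0)
    (hneb : ∃ e, cvec Q b e ≠ 0)
    (hmin : ∀ g : MvPolynomial ↥(SG Q).edgeSet K,
      (∃ u' v' : ↥(SG Q).edgeSet →₀ ℕ, u' ≠ v' ∧ g = binom K u' v') →
      g ∈ graphToricIdeal K (SG Q) →
      g.vars ⊆ (binom K (uOf Q b) (vOf Q b)).vars →
      g.vars = (binom K (uOf Q b) (vOf Q b)).vars) : False := by
  by_cases hA0 : b 0 + b 1 - b 2 = 0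
  · -- centers 1 and 2 are nonzero; use patm 2 = (1,-1,0)
    apply min_contra Q hneb hmin (patm 2)
    · refine ⟨leE Q 0, ?_⟩
      have hp : patm 2 0 = 1 := by rw [← g21, patm_k1]
      rw [cvec_le, hp, mul_one]
      exact pow_ne_zero _ (by norm_num)
    · refine hsub_generic Q ?_ ?_
      · intro j hj
        rcases f3span j 2 with rfl | rfl | rfl
        · rw [patm_k] at hj
          exact absurd rfl hj
        · rw [g21] at hj ⊢
          exact h0
        · rw [g22] at hj ⊢
          exact h1
      · intro j hj
        rcases f3span j 2 with rfl | rfl | rfl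
        · rw [cvec_ce_k Q (patm 2) 2, patm_k, patm_k1, patm_k2] at hj
          rw [cvec_ce_k Q b 2, g21, g22]
          intro h3
          apply h0
          omega
        · rw [cvec_ce_k1 Q (patm 2) 2, patm_k, patm_k1, patm_k2] at hj
          norm_num at hj
        · rw [cvec_ce_k2 Q (patm 2) 2, patm_k, patm_k1, patm_k2] at hj
          rw [cvec_ce_k2 Q b 2, g21, g22]
          intro h3
          apply h1
          omega
    · refine ⟨leE Q 2, ?_, ?_⟩
      · rw [cvec_le]
        exact mul_ne_zero (pow_ne_zero _ (by norm_num)) h2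
      · rw [cvec_le, patm_k, mul_zero]
  · -- center 0 nonzero; use pat 2 = (1,1,0)
    apply min_contra Q hneb hmin (pat 2)
    · refine ⟨leE Q 0, ?_⟩
      have hp : pat 2 0 = 1 := by rw [← g21, pat_k1]
      rw [cvec_le, hp, mul_one]
      exact pow_ne_zero _ (by norm_num)
    · refine hsub_generic Q ?_ ?_
      · intro j hj
        rcases f3span j 2 with rfl | rfl | rfl
        · rw [pat_k] at hj
          exact absurd rfl hj
        · rw [g21] at hj ⊢
          exact h0
        · rw [g22] at hj ⊢
          exact h1
      · intro j hj
        rcases f3span j 2 with rfl | rfl | rfl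
        · rw [cvec_ce_k Q (pat 2) 2, pat_k, pat_k1, pat_k2] at hj
          norm_num at hj
        · rw [cvec_ce_k1 Q (pat 2) 2, pat_k, pat_k1, pat_k2] at hj
          rw [cvec_ce_k1 Q b 2, g21, g22]
          intro h3
          apply hA0
          omega
        · rw [cvec_ce_k2 Q (pat 2) 2, pat_k, pat_k1, pat_k2] at hj
          norm_num at hj
    · refine ⟨leE Q 2, ?_, ?_⟩
      · rw [cvec_le]
        exact mul_ne_zero (pow_ne_zero _ (by norm_num)) h2
      · rw [cvec_le, pat_k, mul_zero]

theorem circuit_bound (g : MvPolynomial ↥(SG Q).edgeSet K)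
    (hg : IsCircuitBinomial (graphToricIdeal K (SG Q)) g) : g.totalDegree ≤ 2*Q + 7 := by
  obtain ⟨⟨u, v, hne, rfl⟩, hmem, hirr, hmin⟩ := hg
  have hdisj := disjoint_of_irreducible (SG Q) hmem hirr
  have hker := (binom_mem_iff_Tsum (SG Q) u v).mp hmem
  obtain ⟨b, hc⟩ : ∃ b, (fun e : ↥(SG Q).edgeSet => (u e : ℤ) - v e) = cvec Q b :=
    ⟨_, kernel_eq_cvec Q _ hker⟩
  have hcv : ∀ e, (u e : ℤ) - v e = cvec Q b e := fun e => congrFun hc e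
  have hu : u = uOf Q b := by
    ext e
    rw [uOf_apply]
    have ha := hcv e
    have hb := hdisj e
    omega
  have hv : v = vOf Q b := by
    ext e
    rw [vOf_apply]
    have ha := hcv e
    have hb := hdisj e
    omega
  rw [hu, hv] at hne hmem hirr hmin ⊢
  have hneb : ∃ e, cvec Q b e ≠ 0 := by
    by_contra hno
    push_neg at hno
    apply hne
    ext e
    rw [uOf_apply, vOf_apply, hno e]
    simp
  suffices hS : ∑ e, |cvec Q b e| ≤ 4*Q + 14 by
    have hdeg := deg_uvOf (K := K) Q hneb
    omega
  by_cases h0 : b 0 = 0 <;> by_cases h1 : b 1 = 0 <;> by_cases h2 : b 2 = 0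
  · -- all zero: contradiction
    exfalso
    obtain ⟨e, he⟩ := hneb
    exact he (cvec_eq_zero Q (fun j => by fin_cases j <;> assumption) e)
  · -- only b 2 ≠ 0
    exact case_one_arm Q 2 h2 (g21 ▸ h0) (g22 ▸ h1) hne hmem hirr
  · -- only b 1 ≠ 0
    exact case_one_arm Q 1 h1 (g11 ▸ h2) (g12 ▸ h0) hne hmem hirr
  · -- b 1, b 2 ≠ 0 : dead arm 0
    exact case_two_arm Q 0 h0 (g01 ▸ h1) (g02 ▸ h2) hneb hne hmem hirr hmin
  · -- only b 0 ≠ 0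
    exact case_one_arm Q 0 h0 (g01 ▸ h1) (g02 ▸ h2) hne hmem hirr
  · -- b 0, b 2 ≠ 0 : dead arm 1
    exact case_two_arm Q 1 h1 (g11 ▸ h2) (g12 ▸ h0) hneb hne hmem hirr hmin
  · -- b 0, b 1 ≠ 0 : dead arm 2
    exact case_two_arm Q 2 h2 (g21 ▸ h0) (g22 ▸ h1) hneb hne hmem hirr hmin
  · -- all nonzero
    exact absurd (case_three_arm Q h0 h1 h2 hneb hmin) id

end WithField2

/-! ### primitivity of the big walk binomial -/

def bone : Fin 3 → ℤ := fun _ => 1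

theorem cvec_bone_ne : ∃ e, cvec Q bone e ≠ 0 :=
  ⟨ceE Q 0, by rw [cvec_ce]; norm_num [bone]⟩

theorem prim : IsPrimitiveBinomial (graphToricIdeal K (SG Q))
    (binom K (uOf Q bone) (vOf Q bone)) := by
  refine ⟨uOf Q bone, vOf Q bone, uvOf_ne Q (cvec_bone_ne Q), rfl,
    mem_uvOf Q bone, ?_⟩
  intro w z hwz hmem hwu hzv
  have hker := (binom_mem_iff_Tsum (SG Q) w z).mp hmem
  obtain ⟨b', hc⟩ : ∃ b', (fun e : ↥(SG Q).edgeSet => (w e : ℤ) - z e) = cvec Q b' :=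
    ⟨_, kernel_eq_cvec Q _ hker⟩
  have hcv : ∀ e, (w e : ℤ) - z e = cvec Q b' e := fun e => congrFun hc e
  have hconfw : ∀ e : ↥(SG Q).edgeSet, w e ≤ (cvec Q bone e).toNat := by
    intro e
    have := Finsupp.le_def.mp hwu e
    rwa [uOf_apply] at this
  have hconfz : ∀ e : ↥(SG Q).edgeSet, z e ≤ (-cvec Q bone e).toNat := by
    intro e
    have := Finsupp.le_def.mp hzv e
    rwa [vOf_apply] at this
  have hb01 : ∀ j, b' j = 0 ∨ b' j = 1 := by
    intro j
    have h1 := hconfw (leE Q j)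
    have h2 := hconfz (leE Q j)
    have h3 : cvec Q bone (leE Q j) = (-1)^Q := by rw [cvec_le]; norm_num [bone]
    have h4 : (-1:ℤ)^Q * b' j = (w (leE Q j) : ℤ) - z (leE Q j) := by
      rw [← cvec_le]
      exact (hcv _).symm
    rw [h3] at h1 h2
    rcases Nat.even_or_odd Q with hq | hq
    · have hε : ((-1:ℤ))^Q = 1 := Even.neg_one_pow hq
      rw [hε] at h1 h2 h4
      omega
    · have hε : ((-1:ℤ))^Q = -1 := Odd.neg_one_pow hq
      rw [hε] at h1 h2 h4
      omega
  have hcent : ∀ j, 0 ≤ cvec Q b' (ceE Q j) ∧ cvec Q b' (ceE Q j) ≤ 1 := by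
    intro j
    have h1 := hconfw (ceE Q j)
    have h2 := hconfz (ceE Q j)
    have h3 : cvec Q bone (ceE Q j) = 1 := by rw [cvec_ce]; norm_num [bone]
    rw [h3] at h1 h2
    have h4 := hcv (ceE Q j)
    omega
  have hc0 := hcent 0
  have hc1 := hcent 1
  have hc2 := hcent 2
  rw [cvec_ce] at hc0 hc1 hc2
  rw [show ((0:Fin 3)+1) = 1 from rfl, show ((0:Fin 3)+2) = 2 from rfl] at hc0
  rw [show ((1:Fin 3)+1) = 2 from rfl, show ((1:Fin 3)+2) = 0 from rfl] at hc1
  rw [show ((2:Fin 3)+1) = 0 from rfl, show ((2:Fin 3)+2) = 1 from rfl] at hc2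
  have hb0 := hb01 0
  have hb1 := hb01 1
  have hb2 := hb01 2
  have hall : (b' 0 = 0 ∧ b' 1 = 0 ∧ b' 2 = 0) ∨ (b' 0 = 1 ∧ b' 1 = 1 ∧ b' 2 = 1) := by
    omega
  rcases hall with ⟨ha0, ha1, ha2⟩ | ⟨ha0, ha1, ha2⟩
  · exfalso
    apply hwz
    ext e
    have h4 := hcv e
    have h5 : cvec Q b' e = 0 :=
      cvec_eq_zero Q (fun j => by fin_cases j <;> assumption) e
    omega
  · have hone : cvec Q b' = cvec Q bone :=
      cvec_congr Q (fun j => by fin_cases j <;> simp [bone, ha0, ha1, ha2])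
    rw [hone] at hcv
    constructor
    · ext e
      have h4 := hcv e
      have h5 := hconfw e
      have h6 := hconfz e
      rw [uOf_apply]
      omega
    · ext e
      have h4 := hcv e
      have h5 := hconfw e
      have h6 := hconfz e
      rw [vOf_apply]
      omega

end WithField

/-! ### connectivity -/

theorem sg_connected : (SG Q).Connected := by
  rw [SimpleGraph.connected_iff]
  refine ⟨?_, ⟨((0 : Fin 3), (⟨0, by omega⟩ : Fin (Q+4)))⟩⟩
  have harm : ∀ (j : Fin 3) (i : ℕ) (h : i < Q+4),
      (SG Q).Reachable (vx Q j 0 (by omega)) (vx Q j i h) := by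
    intro j i
    induction i with
    | zero => intro h; exact SimpleGraph.Reachable.refl _
    | succ n ih =>
      intro h
      refine (ih (by omega)).trans (SimpleGraph.Adj.reachable ?_)
      show SAdj Q (vx Q j n _) (vx Q j (n+1) _)
      exact Or.inr ⟨rfl, Or.inl rfl⟩
  intro x y
  obtain ⟨jx, ix⟩ := x
  obtain ⟨jy, iy⟩ := y
  have hx : ((jx, ix) : SV Q) = vx Q jx ix.val ix.isLt := (eq_vx_iff Q).mpr ⟨rfl, rfl⟩
  have hy : ((jy, iy) : SV Q) = vx Q jy iy.val iy.isLt := (eq_vx_iff Q).mpr ⟨rfl, rfl⟩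
  rw [hx, hy]
  have hcc : (SG Q).Reachable (vx Q jx 0 (by omega)) (vx Q jy 0 (by omega)) := by
    by_cases hj : jx = jy
    · rw [hj]
    · exact SimpleGraph.Adj.reachable (Or.inl ⟨rfl, rfl, hj⟩)
  exact ((harm jx ix.val ix.isLt).symm.trans hcc).trans (harm jy iy.val iy.isLt)

/-! ### conclusion -/

theorem final (K : Type*) [Field K] (N : ℕ) :
    ∃ (V : Type) (_ : Fintype V) (G : SimpleGraph V), G.Connected ∧
      ∃ f, IsPrimitiveBinomial (graphToricIdeal K G) f ∧
        ∀ g, IsCircuitBinomial (graphToricIdeal K G) g →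
          g.totalDegree + N ≤ f.totalDegree := by
  refine ⟨SV N, inferInstance, SG N, sg_connected N,
    binom K (uOf N bone) (vOf N bone), prim N, ?_⟩
  intro g hg
  have h1 := circuit_bound N g hg
  have h2 : 2 * ((binom K (uOf N bone) (vOf N bone)).totalDegree : ℤ) = 6*N + 18 := by
    rw [deg_uvOf N (cvec_bone_ne N), sum_abs_cvec]
    norm_num [bone]
    ring
  omega

end Star

/-- For every `N > 0` there is a finite simple connected graph `G` such that
the Graver basis of `I_G` contains a binomial whose degree exceeds the degree of every circuit
of `I_G` by at least `N`. -/
theorem exists_graph_Graver_degree_gap (K : Type*) [Field K] (N : ℕ) (hN : 0 < N) :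
    ∃ (V : Type) (_ : Fintype V) (G : SimpleGraph V), G.Connected ∧
      ∃ f, IsPrimitiveBinomial (graphToricIdeal K G) f ∧
        ∀ g, IsCircuitBinomial (graphToricIdeal K G) g →
          g.totalDegree + N ≤ f.totalDegree := by
  exact Star.final K N

end
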